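/- arXiv:1212.1725 — 14 statements merged into one kernel-verified Lean document; each statement's English description precedes it below -/
import Mathlib

section
/- Let V : ℝ³ → ℝ be differentiable and let c ∈ ℝ be such that y₁·∂V/∂y₂(y) − y₂·∂V/∂y₁(y) = c for all y ∈ ℝ³. If x : ℝ → ℝ³ is twice differentiable and satisfies ẍ(t) = −∇V(x(t)) for all t, then the function t ↦ x₁(t)·ẋ₂(t) − x₂(t)·ẋ₁(t) + c·t is constant on ℝ. (This is the Noether first integral associated with the rotational Killing vector ∂_θ for a potential of the form V = c·θ + f(r, x₃) in cylindrical coordinates.) -/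
/-- For a Newtonian system `ẍ = −∇V(x)` in ℝ³ whose potential satisfies
`y₁·∂V/∂y₂ − y₂·∂V/∂y₁ = c` everywhere, the Noether integral
`x₁ẋ₂ − x₂ẋ₁ + c·t` (angular momentum about the x₃-axis, shifted by `c·t`) is constant. -/
theorem noether_integral_rotational
    (V : EuclideanSpace ℝ (Fin 3) → ℝ) (hV : Differentiable ℝ V) (c : ℝ)
    (hrot : ∀ y : EuclideanSpace ℝ (Fin 3),
      y 0 * gradient V y 1 - y 1 * gradient V y 0 = c)
    (x x' x'' : ℝ → EuclideanSpace ℝ (Fin 3))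
    (hx : ∀ t : ℝ, HasDerivAt x (x' t) t)
    (hx' : ∀ t : ℝ, HasDerivAt x' (x'' t) t)
    (heq : ∀ t : ℝ, x'' t = -gradient V (x t)) :
    ∀ s t : ℝ,
      x s 0 * x' s 1 - x s 1 * x' s 0 + c * s =
      x t 0 * x' t 1 - x t 1 * x' t 0 + c * t := by
  intro s t
  have hcomp : ∀ (i : Fin 3) (u : ℝ), HasDerivAt (fun r => x r i) (x' u i) u := fun i u =>
    ((PiLp.proj (𝕜 := ℝ) 2 (fun _ : Fin 3 => ℝ) i).hasFDerivAt.comp_hasDerivAt u (hx u))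
  have hcomp' : ∀ (i : Fin 3) (u : ℝ), HasDerivAt (fun r => x' r i) (x'' u i) u := fun i u =>
    ((PiLp.proj (𝕜 := ℝ) 2 (fun _ : Fin 3 => ℝ) i).hasFDerivAt.comp_hasDerivAt u (hx' u))
  have key : ∀ u : ℝ, HasDerivAt
      (fun r => x r 0 * x' r 1 - x r 1 * x' r 0 + c * r) 0 u := by
    intro u
    have h := (((hcomp 0 u).mul (hcomp' 1 u)).sub ((hcomp 1 u).mul (hcomp' 0 u))).add
      ((hasDerivAt_id u).const_mul c)
    convert h using 1
    · rfl
    · rfl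
    · rfl
    have := hrot (x u)
    have h0 := heq u
    have e0 : x'' u 0 = -gradient V (x u) 0 := by rw [h0]; rfl
    have e1 : x'' u 1 = -gradient V (x u) 1 := by rw [h0]; rfl
    rw [e0, e1] at *
    ring_nf
    nlinarith [hrot (x u)]
  have hdiff : Differentiable ℝ (fun r => x r 0 * x' r 1 - x r 1 * x' r 0 + c * r) :=
    fun u => (key u).differentiableAt
  have hderiv : ∀ u, deriv (fun r => x r 0 * x' r 1 - x r 1 * x' r 0 + c * r) u = 0 :=
    fun u => (key u).deriv
  exact is_const_of_deriv_eq_zero hdiff hderiv s t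
end

section
/- Let n ≥ 1, let V : ℝⁿ → ℝ be differentiable, let e ∈ ℝⁿ, ω > 0 and p ∈ ℝ be such that ⟨∇V(y), e⟩ = −ω²·⟨y, e⟩ − p for all y ∈ ℝⁿ. If x : ℝ → ℝⁿ is twice differentiable and satisfies ẍ(t) = −∇V(x(t)) for all t, then the function t ↦ e^{ωt}·( ω·⟨x(t), e⟩ − ⟨ẋ(t), e⟩ + p/ω ) is constant on ℝ. (This is the Noether first integral of Case II associated with the Noether point symmetry e^{ωt}∂_e, admitted by oscillator-type potentials V = −(ω²/2)x_μ² − p x_μ + f(x_ν, x_σ).) -/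
/-- Case II Noether integral for the point symmetry `e^{ωt}∂_e` admitted by
oscillator-type potentials: if `⟨∇V(y), e⟩ = −ω²⟨y, e⟩ − p` for all `y` (with `ω > 0`),
then along any solution of `ẍ = −∇V(x)` the quantity
`e^{ωt}·(ω⟨x, e⟩ − ⟨ẋ, e⟩ + p/ω)` is constant. -/
theorem noether_integral_oscillator
    (n : ℕ) (hn : 1 ≤ n)
    (V : EuclideanSpace ℝ (Fin n) → ℝ) (hV : Differentiable ℝ V)
    (e : EuclideanSpace ℝ (Fin n)) (ω p : ℝ) (hω : 0 < ω)
    (hgrad : ∀ y : EuclideanSpace ℝ (Fin n),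
      (inner ℝ (gradient V y) e : ℝ) = -ω ^ 2 * (inner ℝ y e : ℝ) - p)
    (x x' x'' : ℝ → EuclideanSpace ℝ (Fin n))
    (hx : ∀ t : ℝ, HasDerivAt x (x' t) t)
    (hx' : ∀ t : ℝ, HasDerivAt x' (x'' t) t)
    (heq : ∀ t : ℝ, x'' t = -gradient V (x t)) :
    ∀ s t : ℝ,
      Real.exp (ω * s) * (ω * (inner ℝ (x s) e : ℝ) - (inner ℝ (x' s) e : ℝ) + p / ω) =
      Real.exp (ω * t) * (ω * (inner ℝ (x t) e : ℝ) - (inner ℝ (x' t) e : ℝ) + p / ω) := by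
  set F : ℝ → ℝ := fun t =>
    Real.exp (ω * t) * (ω * (inner ℝ (x t) e : ℝ) - (inner ℝ (x' t) e : ℝ) + p / ω) with hF
  have hderiv : ∀ t : ℝ, HasDerivAt F 0 t := by
    intro t
    have hexp : HasDerivAt (fun t : ℝ => Real.exp (ω * t)) (ω * Real.exp (ω * t)) t := by
      have := (Real.hasDerivAt_exp (ω * t)).comp t ((hasDerivAt_id t).const_mul ω)
      simpa [mul_comm, Function.comp_def] using this
    have h1 : HasDerivAt (fun t => (inner ℝ (x t) e : ℝ)) (inner ℝ (x' t) e : ℝ) t := by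
      have := (hx t).inner ℝ (hasDerivAt_const t e)
      simpa using this
    have h2 : HasDerivAt (fun t => (inner ℝ (x' t) e : ℝ)) (inner ℝ (x'' t) e : ℝ) t := by
      have := (hx' t).inner ℝ (hasDerivAt_const t e)
      simpa using this
    have hin : HasDerivAt
        (fun t => ω * (inner ℝ (x t) e : ℝ) - (inner ℝ (x' t) e : ℝ) + p / ω)
        (ω * (inner ℝ (x' t) e : ℝ) - (inner ℝ (x'' t) e : ℝ)) t :=
      ((h1.const_mul ω).sub h2).add_const _
    have := hexp.mul hin
    have hxx : (inner ℝ (x'' t) e : ℝ) = ω ^ 2 * (inner ℝ (x t) e : ℝ) + p := by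
      rw [heq t, inner_neg_left, hgrad (x t)]; ring
    refine this.congr_deriv ?_
    rw [hxx]
    field_simp
    ring
  intro s t
  have : ∀ a b : ℝ, F a = F b := fun a b =>
    is_const_of_deriv_eq_zero (fun y => (hderiv y).differentiableAt)
      (fun y => (hderiv y).deriv) a b
  exact this s t
end

section
/- Let n ≥ 1, let V : ℝⁿ → ℝ be differentiable and let ω > 0 be such that ⟨y, ∇V(y)⟩ + 2·V(y) + (ω²/2)·|y|² = 0 for all y ∈ ℝⁿ. If x : ℝ → ℝⁿ is twice differentiable and satisfies ẍ(t) = −∇V(x(t)) for all t, then the function t ↦ e^{ωt}·( (2/ω)·E(t) − ⟨x(t), ẋ(t)⟩ + (ω/2)·|x(t)|² ) is constant on ℝ, where E(t) = ½|ẋ(t)|² + V(x(t)). (This is the Noether first integral of Case II, I = 2ψ_Y ∫T dt·E − g_{ij}H^{,i}ẋ^j + T_{,t}H, generated by the gradient homothetic vector with gradient function H = ½|x|² and T(t) = e^{ωt}.) -/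
/-- Case II Noether integral generated by the gradient homothetic vector with
gradient function `H = ½|x|²` and `T(t) = e^{ωt}`: if
`⟨y, ∇V(y)⟩ + 2V(y) + (ω²/2)|y|² = 0` for all `y` (with `ω > 0`), then along any solution
of `ẍ = −∇V(x)` the quantity `e^{ωt}·((2/ω)E − ⟨x, ẋ⟩ + (ω/2)|x|²)` is constant,
where `E = ½|ẋ|² + V(x)`. -/
theorem noether_integral_gradient_homothetic
    (n : ℕ) (hn : 1 ≤ n)
    (V : EuclideanSpace ℝ (Fin n) → ℝ) (hV : Differentiable ℝ V)
    (ω : ℝ) (hω : 0 < ω)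
    (hhom : ∀ y : EuclideanSpace ℝ (Fin n),
      (inner ℝ y (gradient V y) : ℝ) + 2 * V y + (ω ^ 2 / 2) * ‖y‖ ^ 2 = 0)
    (x x' x'' : ℝ → EuclideanSpace ℝ (Fin n))
    (hx : ∀ t : ℝ, HasDerivAt x (x' t) t)
    (hx' : ∀ t : ℝ, HasDerivAt x' (x'' t) t)
    (heq : ∀ t : ℝ, x'' t = -gradient V (x t))
    (E : ℝ → ℝ)
    (hE : ∀ t : ℝ, E t = (1 / 2) * ‖x' t‖ ^ 2 + V (x t)) :
    ∀ s t : ℝ,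
      Real.exp (ω * s) *
          ((2 / ω) * E s - (inner ℝ (x s) (x' s) : ℝ) + (ω / 2) * ‖x s‖ ^ 2) =
      Real.exp (ω * t) *
          ((2 / ω) * E t - (inner ℝ (x t) (x' t) : ℝ) + (ω / 2) * ‖x t‖ ^ 2) := by
  have key : ∀ u : ℝ, HasDerivAt (fun t : ℝ =>
      Real.exp (ω * t) *
        ((2 / ω) * ((1 / 2) * (inner ℝ (x' t) (x' t) : ℝ) + V (x t))
          - (inner ℝ (x t) (x' t) : ℝ) + (ω / 2) * (inner ℝ (x t) (x t) : ℝ))) 0 u := by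
    intro u
    have hexp : HasDerivAt (fun t : ℝ => Real.exp (ω * t)) (ω * Real.exp (ω * u)) u := by
      have := (Real.hasDerivAt_exp (ω * u)).comp u ((hasDerivAt_id u).const_mul ω)
      simpa [mul_comm, Function.comp_def] using this
    have h1 := (hx' u).inner ℝ (hx' u)
    have h2 := (hx u).inner ℝ (hx' u)
    have h3 := (hx u).inner ℝ (hx u)
    have hVd : HasDerivAt (fun t => V (x t)) (inner ℝ (gradient V (x u)) (x' u) : ℝ) u := by
      exact ((hV (x u)).hasGradientAt.hasFDerivAt.comp_hasDerivAt u (hx u))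
    have hG := (((h1.const_mul (1/2 : ℝ)).add hVd).const_mul (2/ω)).sub h2 |>.add
      (h3.const_mul (ω/2))
    have hF := hexp.mul hG
    convert hF using 1
    case e'_4 => rfl
    case e'_5 => rfl
    case e'_8 => rfl
    have hh := hhom (x u)
    rw [← real_inner_self_eq_norm_sq] at hh
    have hcomm : (inner ℝ (x' u) (x u) : ℝ) = inner ℝ (x u) (x' u) := real_inner_comm _ _
    have hng : (inner ℝ (x u) (x'' u) : ℝ) = -(inner ℝ (x u) (gradient V (x u)) : ℝ) := by
      rw [heq]; exact inner_neg_right _ _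
    have hng2 : (inner ℝ (x'' u) (x' u) : ℝ) = -(inner ℝ (gradient V (x u)) (x' u) : ℝ) := by
      rw [heq]; exact inner_neg_left _ _
    have hng3 : (inner ℝ (x' u) (x'' u) : ℝ) = -(inner ℝ (gradient V (x u)) (x' u) : ℝ) := by
      rw [heq, inner_neg_right, real_inner_comm]
    rw [hng, hng2, hng3, hcomm]
    simp only [Pi.add_apply, Pi.sub_apply]
    have hω' : ω ≠ 0 := ne_of_gt hω
    generalize (inner ℝ (gradient V (x u)) (x' u) : ℝ) = m at *
    generalize hq : (inner ℝ (x' u) (x' u) : ℝ) = q at *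
    generalize hp : (inner ℝ (x u) (x' u) : ℝ) = p at *
    generalize hr : (inner ℝ (x u) (gradient V (x u)) : ℝ) = r at *
    generalize hw : (inner ℝ (x u) (x u) : ℝ) = w at *
    field_simp
    linear_combination (-2 * ω * Real.exp (ω * u)) * hh
  have hconst := is_const_of_deriv_eq_zero (f := fun t : ℝ =>
      Real.exp (ω * t) *
        ((2 / ω) * ((1 / 2) * (inner ℝ (x' t) (x' t) : ℝ) + V (x t))
          - (inner ℝ (x t) (x' t) : ℝ) + (ω / 2) * (inner ℝ (x t) (x t) : ℝ)))
    (fun u => (key u).differentiableAt) (fun u => (key u).deriv)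
  intro s t
  have := hconst s t
  simpa [hE, real_inner_self_eq_norm_sq] using this
end

section
/- (Ermakov system.) Let ω > 0 and let W : ℝ³ ∖ {0} → ℝ be differentiable and positively homogeneous of degree −2, i.e. W(s·y) = s⁻²·W(y) for all s > 0 and all y ≠ 0. Set V(y) = −(ω²/8)·|y|² + W(y). If x : ℝ → ℝ³ ∖ {0} is twice differentiable and satisfies ẍ(t) = −∇V(x(t)) = (ω²/4)·x(t) − ∇W(x(t)) for all t, then the function t ↦ e^{ωt}·( (2/ω)·E(t) − ⟨x(t), ẋ(t)⟩ + (ω/2)·|x(t)|² ) is constant on ℝ, where E(t) = ½|ẋ(t)|² + V(x(t)). -/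
open scoped RealInnerProductSpace

/-- Euler's theorem for homogeneity of degree −2. -/
lemma euler_neg_two
    (W : EuclideanSpace ℝ (Fin 3) → ℝ)
    (hW : ∀ y : EuclideanSpace ℝ (Fin 3), y ≠ 0 → DifferentiableAt ℝ W y)
    (hWhom : ∀ s : ℝ, 0 < s → ∀ y : EuclideanSpace ℝ (Fin 3), y ≠ 0 →
      W (s • y) = s⁻¹ ^ 2 * W y)
    (y : EuclideanSpace ℝ (Fin 3)) (hy : y ≠ 0) :
    ⟪gradient W y, y⟫ = -2 * W y := by
  have hsm : HasDerivAt (fun s : ℝ => s • y) y 1 := by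
    simpa using (hasDerivAt_id (1 : ℝ)).smul_const y
  have hgrad : HasGradientAt W (gradient W y) y := (hW y hy).hasGradientAt
  have hfd : HasFDerivAt W ((InnerProductSpace.toDual ℝ _) (gradient W y)) y :=
    hgrad.hasFDerivAt
  have hfd1 : HasFDerivAt W ((InnerProductSpace.toDual ℝ _) (gradient W y)) ((1 : ℝ) • y) := by
    rwa [one_smul]
  have h1 : HasDerivAt (fun s : ℝ => W (s • y)) (⟪gradient W y, y⟫) 1 := by
    have := hfd1.comp_hasDerivAt 1 hsm
    simpa [Function.comp_def] using this
  have h2 : HasDerivAt (fun s : ℝ => s⁻¹ ^ 2 * W y) (-2 * W y) 1 := by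
    have hz : HasDerivAt (fun s : ℝ => s ^ (-2 : ℤ)) ((-2 : ℤ) * (1 : ℝ) ^ ((-2 : ℤ) - 1)) 1 :=
      hasDerivAt_zpow (-2) 1 (Or.inl one_ne_zero)
    have hz' : HasDerivAt (fun s : ℝ => s⁻¹ ^ 2) (-2) 1 := by
      have heqf : (fun s : ℝ => s ^ (-2 : ℤ)) = fun s : ℝ => s⁻¹ ^ 2 := by
        funext s; rw [zpow_neg, ← inv_zpow]; norm_cast
      rw [heqf] at hz
      convert hz using 1; norm_num
    simpa using hz'.mul_const (W y)
  have heqv : (fun s : ℝ => W (s • y)) =ᶠ[nhds (1 : ℝ)] fun s : ℝ => s⁻¹ ^ 2 * W y := by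
    filter_upwards [lt_mem_nhds (show (0 : ℝ) < 1 by norm_num)] with s hs
    exact hWhom s hs y hy
  have h2' : HasDerivAt (fun s : ℝ => W (s • y)) (-2 * W y) 1 :=
    h2.congr_of_eventuallyEq heqv
  exact h1.unique h2'

/-- Ermakov system: let `ω > 0` and `W : ℝ³∖{0} → ℝ` be differentiable and
positively homogeneous of degree −2, and set `V(y) = −(ω²/8)|y|² + W(y)`. Along any
solution `x` (with `x(t) ≠ 0`) of `ẍ = −∇V(x) = (ω²/4)x − ∇W(x)`, the quantity
`e^{ωt}·((2/ω)E − ⟨x, ẋ⟩ + (ω/2)|x|²)` is constant, where `E = ½|ẋ|² + V(x)`. -/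
theorem ermakov_noether_integral
    (ω : ℝ) (hω : 0 < ω)
    (W : EuclideanSpace ℝ (Fin 3) → ℝ)
    (hW : ∀ y : EuclideanSpace ℝ (Fin 3), y ≠ 0 → DifferentiableAt ℝ W y)
    (hWhom : ∀ s : ℝ, 0 < s → ∀ y : EuclideanSpace ℝ (Fin 3), y ≠ 0 →
      W (s • y) = s⁻¹ ^ 2 * W y)
    (V : EuclideanSpace ℝ (Fin 3) → ℝ)
    (hV : ∀ y : EuclideanSpace ℝ (Fin 3), V y = -(ω ^ 2 / 8) * ‖y‖ ^ 2 + W y)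
    (x x' x'' : ℝ → EuclideanSpace ℝ (Fin 3))
    (hxne : ∀ t : ℝ, x t ≠ 0)
    (hx : ∀ t : ℝ, HasDerivAt x (x' t) t)
    (hx' : ∀ t : ℝ, HasDerivAt x' (x'' t) t)
    (heq : ∀ t : ℝ, x'' t = (ω ^ 2 / 4) • x t - gradient W (x t))
    (E : ℝ → ℝ)
    (hE : ∀ t : ℝ, E t = (1 / 2) * ‖x' t‖ ^ 2 + V (x t)) :
    ∀ s t : ℝ,
      Real.exp (ω * s) *
          ((2 / ω) * E s - (inner ℝ (x s) (x' s) : ℝ) + (ω / 2) * ‖x s‖ ^ 2) =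
      Real.exp (ω * t) *
          ((2 / ω) * E t - (inner ℝ (x t) (x' t) : ℝ) + (ω / 2) * ‖x t‖ ^ 2) := by
  intro s t
  set G : ℝ → ℝ := fun t =>
    Real.exp (ω * t) *
      ((2 / ω) * ((1 / 2) * ⟪x' t, x' t⟫ + (-(ω ^ 2 / 8) * ⟪x t, x t⟫ + W (x t)))
        - ⟪x t, x' t⟫ + (ω / 2) * ⟪x t, x t⟫) with hG
  have hGd : ∀ t : ℝ, HasDerivAt G 0 t := by
    intro t
    -- derivatives of the pieces
    have ha : HasDerivAt (fun t => ⟪x' t, x' t⟫) (⟪x' t, x'' t⟫ + ⟪x'' t, x' t⟫) t :=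
      (hx' t).inner ℝ (hx' t)
    have hb : HasDerivAt (fun t => ⟪x t, x t⟫) (⟪x t, x' t⟫ + ⟪x' t, x t⟫) t :=
      (hx t).inner ℝ (hx t)
    have hc : HasDerivAt (fun t => ⟪x t, x' t⟫) (⟪x t, x'' t⟫ + ⟪x' t, x' t⟫) t :=
      (hx t).inner ℝ (hx' t)
    have hw : HasDerivAt (fun t => W (x t)) (⟪gradient W (x t), x' t⟫) t := by
      have hfd : HasFDerivAt W ((InnerProductSpace.toDual ℝ _) (gradient W (x t))) (x t) :=
        ((hW (x t) (hxne t)).hasGradientAt).hasFDerivAt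
      simpa [Function.comp_def] using hfd.comp_hasDerivAt t (hx t)
    have hexp : HasDerivAt (fun t : ℝ => Real.exp (ω * t)) (ω * Real.exp (ω * t)) t := by
      simpa [mul_comm, Function.comp_def] using (Real.hasDerivAt_exp (ω * t)).comp t
        ((hasDerivAt_id t).const_mul ω)
    have hinner : HasDerivAt
        (fun t => (2 / ω) * ((1 / 2) * ⟪x' t, x' t⟫ + (-(ω ^ 2 / 8) * ⟪x t, x t⟫ + W (x t)))
          - ⟪x t, x' t⟫ + (ω / 2) * ⟪x t, x t⟫)
        ((2 / ω) * ((1 / 2) * (⟪x' t, x'' t⟫ + ⟪x'' t, x' t⟫)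
            + (-(ω ^ 2 / 8) * (⟪x t, x' t⟫ + ⟪x' t, x t⟫) + ⟪gradient W (x t), x' t⟫))
          - (⟪x t, x'' t⟫ + ⟪x' t, x' t⟫) + (ω / 2) * (⟪x t, x' t⟫ + ⟪x' t, x t⟫)) t := by
      exact ((((ha.const_mul (1/2 : ℝ)).add ((hb.const_mul (-(ω^2/8))).add hw)).const_mul
        (2/ω)).sub hc).add (hb.const_mul (ω/2))
    have hGt := hexp.mul hinner
    -- the total derivative vanishes
    have hkey : ω * Real.exp (ω * t) *
        ((2 / ω) * ((1 / 2) * ⟪x' t, x' t⟫ + (-(ω ^ 2 / 8) * ⟪x t, x t⟫ + W (x t)))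
          - ⟪x t, x' t⟫ + (ω / 2) * ⟪x t, x t⟫)
        + Real.exp (ω * t) *
        ((2 / ω) * ((1 / 2) * (⟪x' t, x'' t⟫ + ⟪x'' t, x' t⟫)
            + (-(ω ^ 2 / 8) * (⟪x t, x' t⟫ + ⟪x' t, x t⟫) + ⟪gradient W (x t), x' t⟫))
          - (⟪x t, x'' t⟫ + ⟪x' t, x' t⟫) + (ω / 2) * (⟪x t, x' t⟫ + ⟪x' t, x t⟫)) = 0 := by
      have hsymm : ⟪x' t, x t⟫ = ⟪x t, x' t⟫ := real_inner_comm _ _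
      have h1 : ⟪x t, x'' t⟫ = (ω ^ 2 / 4) * ⟪x t, x t⟫ + 2 * W (x t) := by
        have he : (inner ℝ (x t) (gradient W (x t)) : ℝ) = -2 * W (x t) := by
          rw [real_inner_comm]
          exact euler_neg_two W hW hWhom (x t) (hxne t)
        rw [heq t, inner_sub_right, real_inner_smul_right, he]
        ring
      have h2 : ⟪x'' t, x' t⟫ = (ω ^ 2 / 4) * ⟪x t, x' t⟫ - ⟪gradient W (x t), x' t⟫ := by
        rw [heq t, inner_sub_left, real_inner_smul_left]
      have h3 : ⟪x' t, x'' t⟫ = (ω ^ 2 / 4) * ⟪x t, x' t⟫ - ⟪gradient W (x t), x' t⟫ := by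
        rw [real_inner_comm, h2]
      rw [h1, h2, h3, hsymm]
      field_simp
      ring
    simp only [hG]
    exact hkey ▸ hGt
  have hconst : G s = G t :=
    is_const_of_deriv_eq_zero (fun u => (hGd u).differentiableAt)
      (fun u => (hGd u).deriv) s t
  have hrw : ∀ u : ℝ, Real.exp (ω * u) *
      ((2 / ω) * E u - (inner ℝ (x u) (x' u) : ℝ) + (ω / 2) * ‖x u‖ ^ 2) = G u := by
    intro u
    rw [hE u, hV (x u), hG]
    rw [← real_inner_self_eq_norm_sq (x u), ← real_inner_self_eq_norm_sq (x' u)]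
  rw [hrw s, hrw t, hconst]
end

section
/- Suppose the potential of motion on the 2-sphere has the form V(θ, φ) = F(cos θ · sin φ) for some differentiable function F : ℝ → ℝ. Then along any solution (φ(t), θ(t)) of the equations of motion on an interval where sin φ(t) ≠ 0, the quantity I¹(t) = φ̇(t)·sin θ(t) + θ̇(t)·cos θ(t)·sin φ(t)·cos φ(t) is constant. (This is the Noether integral I_{CK¹} of Table 7.) -/
open Real

private lemma partial_snd (V : ℝ × ℝ → ℝ) (hV : Differentiable ℝ V)
    (F : ℝ → ℝ) (hF : Differentiable ℝ F)
    (hform : ∀ p : ℝ × ℝ, V p = F (cos p.1 * sin p.2)) (a b : ℝ) :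
    fderiv ℝ V (a, b) (0, 1) = deriv F (cos a * sin b) * (cos a * cos b) := by
  have hg : HasDerivAt (fun y : ℝ => ((a : ℝ), y)) ((0 : ℝ), (1 : ℝ)) b :=
    (hasDerivAt_const b a).prodMk (hasDerivAt_id b)
  have h1 : HasDerivAt (fun y => V (a, y)) (fderiv ℝ V (a, b) (0, 1)) b :=
    (hV (a, b)).hasFDerivAt.comp_hasDerivAt b hg
  have h2 : HasDerivAt (fun y => V (a, y))
      (deriv F (cos a * sin b) * (cos a * cos b)) b := by
    have hfun : (fun y => V (a, y)) = fun y => F (cos a * sin y) :=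
      funext fun y => hform (a, y)
    rw [hfun]
    have hin : HasDerivAt (fun y => cos a * sin y) (cos a * cos b) b := by
      simpa [mul_comm] using (Real.hasDerivAt_sin b).const_mul (cos a)
    exact (hF (cos a * sin b)).hasDerivAt.comp b hin
  exact h1.unique h2

private lemma partial_fst (V : ℝ × ℝ → ℝ) (hV : Differentiable ℝ V)
    (F : ℝ → ℝ) (hF : Differentiable ℝ F)
    (hform : ∀ p : ℝ × ℝ, V p = F (cos p.1 * sin p.2)) (a b : ℝ) :
    fderiv ℝ V (a, b) (1, 0) = deriv F (cos a * sin b) * (-sin a * sin b) := by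
  have hg : HasDerivAt (fun x : ℝ => (x, (b : ℝ))) ((1 : ℝ), (0 : ℝ)) a :=
    (hasDerivAt_id a).prodMk (hasDerivAt_const a b)
  have h1 : HasDerivAt (fun x => V (x, b)) (fderiv ℝ V (a, b) (1, 0)) a :=
    (hV (a, b)).hasFDerivAt.comp_hasDerivAt a hg
  have h2 : HasDerivAt (fun x => V (x, b))
      (deriv F (cos a * sin b) * (-sin a * sin b)) a := by
    have hfun : (fun x => V (x, b)) = fun x => F (cos x * sin b) :=
      funext fun x => hform (x, b)
    rw [hfun]
    have hin : HasDerivAt (fun x => cos x * sin b) (-sin a * sin b) a :=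
      (Real.hasDerivAt_cos a).mul_const (sin b)
    exact (hF (cos a * sin b)).hasDerivAt.comp a hin
  exact h1.unique h2

/-- motion on the 2-sphere with potential of the form
`V(θ, φ) = F(cos θ · sin φ)`. Along any solution on an interval where `sin φ ≠ 0`, the
Noether integral `I¹ = φ̇·sin θ + θ̇·cos θ·sin φ·cos φ` is constant. -/
theorem sphere_noether_I1
    (V : ℝ × ℝ → ℝ) (hV : Differentiable ℝ V)
    (F : ℝ → ℝ) (hF : Differentiable ℝ F)
    (hform : ∀ p : ℝ × ℝ, V p = F (cos p.1 * sin p.2))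
    (t₀ t₁ : ℝ) (φ θ φ' θ' φ'' θ'' : ℝ → ℝ)
    (hφ : ∀ t ∈ Set.Ioo t₀ t₁, HasDerivAt φ (φ' t) t)
    (hφ' : ∀ t ∈ Set.Ioo t₀ t₁, HasDerivAt φ' (φ'' t) t)
    (hθ : ∀ t ∈ Set.Ioo t₀ t₁, HasDerivAt θ (θ' t) t)
    (hθ' : ∀ t ∈ Set.Ioo t₀ t₁, HasDerivAt θ' (θ'' t) t)
    (hsin : ∀ t ∈ Set.Ioo t₀ t₁, sin (φ t) ≠ 0)
    (eomφ : ∀ t ∈ Set.Ioo t₀ t₁,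
      φ'' t - sin (φ t) * cos (φ t) * (θ' t) ^ 2
        + fderiv ℝ V (θ t, φ t) (0, 1) = 0)
    (eomθ : ∀ t ∈ Set.Ioo t₀ t₁,
      θ'' t + 2 * (cos (φ t) / sin (φ t)) * θ' t * φ' t
        + (1 / sin (φ t) ^ 2) * fderiv ℝ V (θ t, φ t) (1, 0) = 0) :
    ∀ s ∈ Set.Ioo t₀ t₁, ∀ t ∈ Set.Ioo t₀ t₁,
      φ' s * sin (θ s) + θ' s * cos (θ s) * sin (φ s) * cos (φ s) =
      φ' t * sin (θ t) + θ' t * cos (θ t) * sin (φ t) * cos (φ t) := by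
  set I : ℝ → ℝ := fun t =>
    φ' t * sin (θ t) + θ' t * cos (θ t) * sin (φ t) * cos (φ t) with hI
  -- the integral has zero derivative on the interval
  have key : ∀ t ∈ Set.Ioo t₀ t₁, HasDerivAt I 0 t := by
    intro t ht
    have hs := hsin t ht
    have hA := partial_snd V hV F hF hform (θ t) (φ t)
    have hB := partial_fst V hV F hF hform (θ t) (φ t)
    have e1 : φ'' t = sin (φ t) * cos (φ t) * (θ' t) ^ 2
        - deriv F (cos (θ t) * sin (φ t)) * (cos (θ t) * cos (φ t)) := by
      have := eomφ t ht; rw [hA] at this; linarith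
    have e2 : θ'' t = -(2 * (cos (φ t) / sin (φ t)) * θ' t * φ' t)
        - (1 / sin (φ t) ^ 2) *
          (deriv F (cos (θ t) * sin (φ t)) * (-sin (θ t) * sin (φ t))) := by
      have := eomθ t ht; rw [hB] at this; linarith
    have h1 : HasDerivAt (fun u => φ' u * sin (θ u))
        (φ'' t * sin (θ t) + φ' t * (cos (θ t) * θ' t)) t :=
      (hφ' t ht).mul ((Real.hasDerivAt_sin (θ t)).comp t (hθ t ht))
    have h2 : HasDerivAt (fun u => θ' u * cos (θ u))
        (θ'' t * cos (θ t) + θ' t * (-sin (θ t) * θ' t)) t :=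
      (hθ' t ht).mul ((Real.hasDerivAt_cos (θ t)).comp t (hθ t ht))
    have h3 : HasDerivAt (fun u => θ' u * cos (θ u) * sin (φ u))
        ((θ'' t * cos (θ t) + θ' t * (-sin (θ t) * θ' t)) * sin (φ t)
          + θ' t * cos (θ t) * (cos (φ t) * φ' t)) t :=
      h2.mul ((Real.hasDerivAt_sin (φ t)).comp t (hφ t ht))
    have h4 : HasDerivAt (fun u => θ' u * cos (θ u) * sin (φ u) * cos (φ u))
        (((θ'' t * cos (θ t) + θ' t * (-sin (θ t) * θ' t)) * sin (φ t)
          + θ' t * cos (θ t) * (cos (φ t) * φ' t)) * cos (φ t)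
          + θ' t * cos (θ t) * sin (φ t) * (-sin (φ t) * φ' t)) t :=
      h3.mul ((Real.hasDerivAt_cos (φ t)).comp t (hφ t ht))
    have hIderiv := h1.add h4
    have hzero : φ'' t * sin (θ t) + φ' t * (cos (θ t) * θ' t)
        + (((θ'' t * cos (θ t) + θ' t * (-sin (θ t) * θ' t)) * sin (φ t)
          + θ' t * cos (θ t) * (cos (φ t) * φ' t)) * cos (φ t)
          + θ' t * cos (θ t) * sin (φ t) * (-sin (φ t) * φ' t)) = 0 := by
      rw [e1, e2]
      have hpy : sin (φ t) ^ 2 + cos (φ t) ^ 2 = 1 := Real.sin_sq_add_cos_sq (φ t)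
      field_simp
      linear_combination (-(θ' t * cos (θ t) * φ' t)) * hpy
    have h5 : HasDerivAt I _ t := hIderiv
    rwa [hzero] at h5
  -- conclude constancy via mean value theorem
  have const : ∀ s ∈ Set.Ioo t₀ t₁, ∀ t ∈ Set.Ioo t₀ t₁, s < t → I s = I t := by
    intro s hs t ht hst
    have hsub : Set.Icc s t ⊆ Set.Ioo t₀ t₁ := fun x hx =>
      ⟨lt_of_lt_of_le hs.1 hx.1, lt_of_le_of_lt hx.2 ht.2⟩
    have hcont : ContinuousOn I (Set.Icc s t) := fun x hx =>
      (key x (hsub hx)).continuousAt.continuousWithinAt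
    have hderiv : ∀ x ∈ Set.Ioo s t, HasDerivAt I 0 x := fun x hx =>
      key x (hsub ⟨le_of_lt hx.1, le_of_lt hx.2⟩)
    obtain ⟨c, hc, hc'⟩ := exists_hasDerivAt_eq_slope I (fun _ => (0 : ℝ)) hst hcont hderiv
    have : (I t - I s) / (t - s) = 0 := hc'.symm
    have hne : t - s ≠ 0 := sub_ne_zero.mpr (ne_of_gt hst)
    field_simp at this
    linarith
  intro s hs t ht
  rcases lt_trichotomy s t with h | h | h
  · exact const s hs t ht h
  · rw [h]
  · exact (const t ht s hs h).symm
end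

section
/- Suppose the potential of motion on the 2-sphere has the form V(θ, φ) = F(sin θ · sin φ) for some differentiable function F : ℝ → ℝ. Then along any solution (φ(t), θ(t)) of the equations of motion on an interval where sin φ(t) ≠ 0, the quantity I²(t) = φ̇(t)·cos θ(t) − θ̇(t)·sin θ(t)·sin φ(t)·cos φ(t) is constant. (This is the Noether integral I_{CK²} of Table 7.) -/
open Real

theorem fderiv_sinsin_comp (F : ℝ → ℝ) (hF : Differentiable ℝ F) (a b : ℝ) :
    HasFDerivAt (fun p : ℝ × ℝ => F (sin p.1 * sin p.2))
      (deriv F (sin a * sin b) •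
        (sin (a, b).1 • cos b • ContinuousLinearMap.snd ℝ ℝ ℝ +
          sin (a, b).2 • cos a • ContinuousLinearMap.fst ℝ ℝ ℝ)) (a, b) := by
  have h1 : HasFDerivAt (fun p : ℝ × ℝ => sin p.1)
      (cos a • ContinuousLinearMap.fst ℝ ℝ ℝ) (a, b) :=
    by have := (Real.hasDerivAt_sin a).comp_hasFDerivAt (a, b) (hasFDerivAt_fst (𝕜 := ℝ)); exact this
  have h2 : HasFDerivAt (fun p : ℝ × ℝ => sin p.2)
      (cos b • ContinuousLinearMap.snd ℝ ℝ ℝ) (a, b) :=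
    by have := (Real.hasDerivAt_sin b).comp_hasFDerivAt (a, b) (hasFDerivAt_snd (𝕜 := ℝ)); exact this
  exact (hF (sin a * sin b)).hasDerivAt.comp_hasFDerivAt (a, b) (h1.mul h2)

theorem fderiv_sinsin_fst (F : ℝ → ℝ) (hF : Differentiable ℝ F) (a b : ℝ) :
    fderiv ℝ (fun p : ℝ × ℝ => F (sin p.1 * sin p.2)) (a, b) (1, 0)
      = deriv F (sin a * sin b) * (cos a * sin b) := by
  rw [(fderiv_sinsin_comp F hF a b).fderiv]
  simp only [ContinuousLinearMap.smul_apply, ContinuousLinearMap.add_apply,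
    ContinuousLinearMap.coe_fst', ContinuousLinearMap.coe_snd', smul_eq_mul]
  ring

theorem fderiv_sinsin_snd (F : ℝ → ℝ) (hF : Differentiable ℝ F) (a b : ℝ) :
    fderiv ℝ (fun p : ℝ × ℝ => F (sin p.1 * sin p.2)) (a, b) (0, 1)
      = deriv F (sin a * sin b) * (sin a * cos b) := by
  rw [(fderiv_sinsin_comp F hF a b).fderiv]
  simp only [ContinuousLinearMap.smul_apply, ContinuousLinearMap.add_apply,
    ContinuousLinearMap.coe_fst', ContinuousLinearMap.coe_snd', smul_eq_mul]
  ring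

/-- motion on the 2-sphere with potential of the form
`V(θ, φ) = F(sin θ · sin φ)`. Along any solution on an interval where `sin φ ≠ 0`, the
Noether integral `I² = φ̇·cos θ − θ̇·sin θ·sin φ·cos φ` is constant. -/
theorem sphere_noether_I2
    (V : ℝ × ℝ → ℝ) (hV : Differentiable ℝ V)
    (F : ℝ → ℝ) (hF : Differentiable ℝ F)
    (hform : ∀ p : ℝ × ℝ, V p = F (sin p.1 * sin p.2))
    (t₀ t₁ : ℝ) (φ θ φ' θ' φ'' θ'' : ℝ → ℝ)
    (hφ : ∀ t ∈ Set.Ioo t₀ t₁, HasDerivAt φ (φ' t) t)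
    (hφ' : ∀ t ∈ Set.Ioo t₀ t₁, HasDerivAt φ' (φ'' t) t)
    (hθ : ∀ t ∈ Set.Ioo t₀ t₁, HasDerivAt θ (θ' t) t)
    (hθ' : ∀ t ∈ Set.Ioo t₀ t₁, HasDerivAt θ' (θ'' t) t)
    (hsin : ∀ t ∈ Set.Ioo t₀ t₁, sin (φ t) ≠ 0)
    (eomφ : ∀ t ∈ Set.Ioo t₀ t₁,
      φ'' t - sin (φ t) * cos (φ t) * (θ' t) ^ 2
        + fderiv ℝ V (θ t, φ t) (0, 1) = 0)
    (eomθ : ∀ t ∈ Set.Ioo t₀ t₁,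
      θ'' t + 2 * (cos (φ t) / sin (φ t)) * θ' t * φ' t
        + (1 / sin (φ t) ^ 2) * fderiv ℝ V (θ t, φ t) (1, 0) = 0) :
    ∀ s ∈ Set.Ioo t₀ t₁, ∀ t ∈ Set.Ioo t₀ t₁,
      φ' s * cos (θ s) - θ' s * sin (θ s) * sin (φ s) * cos (φ s) =
      φ' t * cos (θ t) - θ' t * sin (θ t) * sin (φ t) * cos (φ t) := by
  have hVeq : V = fun p : ℝ × ℝ => F (sin p.1 * sin p.2) := funext hform
  subst hVeq
  set g : ℝ → ℝ := fun t =>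
    φ' t * cos (θ t) - θ' t * sin (θ t) * sin (φ t) * cos (φ t) with hg
  have hD0 : ∀ t ∈ Set.Ioo t₀ t₁, HasDerivAt g 0 t := by
    intro t ht
    have hD := ((hφ' t ht).mul (hθ t ht).cos).sub
      ((((hθ' t ht).mul (hθ t ht).sin).mul (hφ t ht).sin).mul (hφ t ht).cos)
    convert (show HasDerivAt g _ t from hD) using 1
    have e1 := eomφ t ht
    have e2 := eomθ t ht
    rw [fderiv_sinsin_snd F hF] at e1
    rw [fderiv_sinsin_fst F hF] at e2
    have hS := hsin t ht
    set dF := deriv F (sin (θ t) * sin (φ t)) with hdF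
    have e2' : θ'' t * sin (φ t) + 2 * cos (φ t) * θ' t * φ' t
        + dF * cos (θ t) = 0 := by
      have hS2 : sin (φ t) ^ 2 ≠ 0 := pow_ne_zero 2 hS
      field_simp at e2
      have h : (θ'' t * sin (φ t) + 2 * cos (φ t) * θ' t * φ' t
          + dF * cos (θ t)) * sin (φ t) ^ 2 = 0 := by linear_combination (sin (φ t) ^ 2) * e2
      exact (mul_eq_zero.mp h).resolve_right hS2
    have pyth := sin_sq_add_cos_sq (φ t)
    simp only [Pi.mul_apply]
    linear_combination (-(cos (θ t))) * e1 + (sin (θ t) * cos (φ t)) * e2'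
      - (sin (θ t) * θ' t * φ' t) * pyth
  intro s hs t ht
  exact (convex_Ioo t₀ t₁).is_const_of_fderivWithin_eq_zero
    (fun x hx => ((hD0 x hx).differentiableAt).differentiableWithinAt)
    (fun x hx => by
      rw [fderivWithin_of_isOpen isOpen_Ioo hx, (hD0 x hx).hasFDerivAt.fderiv]
      exact ContinuousLinearMap.ext fun v => by simp) hs ht
end

section
/- Let a, c ∈ ℝ and suppose the potential of motion on the 2-sphere has the form V(θ, φ) = F(a·cos θ·sin φ − c·cos φ) for some differentiable function F : ℝ → ℝ. Then along any solution (φ(t), θ(t)) of the equations of motion on an interval where sin φ(t) ≠ 0, the quantity a·I¹(t) + c·I³(t) is constant, where I¹ = φ̇ sin θ + θ̇ cos θ sin φ cos φ and I³ = θ̇ sin²φ. (This is the row a I_{CK¹} + b I_{CK³} of Table 7.) -/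
open Real

/-- motion on the 2-sphere with potential of the form
`V(θ, φ) = F(a·cos θ·sin φ − c·cos φ)`. Along any solution on an interval where
`sin φ ≠ 0`, the combination `a·I¹ + c·I³` of the Noether integrals
`I¹ = φ̇·sin θ + θ̇·cos θ·sin φ·cos φ` and `I³ = θ̇·sin²φ` is constant. -/
theorem sphere_noether_aI1_cI3
    (a c : ℝ)
    (V : ℝ × ℝ → ℝ) (hV : Differentiable ℝ V)
    (F : ℝ → ℝ) (hF : Differentiable ℝ F)
    (hform : ∀ p : ℝ × ℝ, V p = F (a * cos p.1 * sin p.2 - c * cos p.2))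
    (t₀ t₁ : ℝ) (φ θ φ' θ' φ'' θ'' : ℝ → ℝ)
    (hφ : ∀ t ∈ Set.Ioo t₀ t₁, HasDerivAt φ (φ' t) t)
    (hφ' : ∀ t ∈ Set.Ioo t₀ t₁, HasDerivAt φ' (φ'' t) t)
    (hθ : ∀ t ∈ Set.Ioo t₀ t₁, HasDerivAt θ (θ' t) t)
    (hθ' : ∀ t ∈ Set.Ioo t₀ t₁, HasDerivAt θ' (θ'' t) t)
    (hsin : ∀ t ∈ Set.Ioo t₀ t₁, sin (φ t) ≠ 0)
    (eomφ : ∀ t ∈ Set.Ioo t₀ t₁,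
      φ'' t - sin (φ t) * cos (φ t) * (θ' t) ^ 2
        + fderiv ℝ V (θ t, φ t) (0, 1) = 0)
    (eomθ : ∀ t ∈ Set.Ioo t₀ t₁,
      θ'' t + 2 * (cos (φ t) / sin (φ t)) * θ' t * φ' t
        + (1 / sin (φ t) ^ 2) * fderiv ℝ V (θ t, φ t) (1, 0) = 0) :
    ∀ s ∈ Set.Ioo t₀ t₁, ∀ t ∈ Set.Ioo t₀ t₁,
      a * (φ' s * sin (θ s) + θ' s * cos (θ s) * sin (φ s) * cos (φ s))
          + c * (θ' s * sin (φ s) ^ 2) =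
      a * (φ' t * sin (θ t) + θ' t * cos (θ t) * sin (φ t) * cos (φ t))
          + c * (θ' t * sin (φ t) ^ 2) := by
  -- directional derivatives of V
  have hVθ : ∀ x y : ℝ, fderiv ℝ V (x, y) (1, 0)
      = deriv F (a * cos x * sin y - c * cos y) * (-(a * sin x * sin y)) := by
    intro x y
    have l1 : HasDerivAt (fun s : ℝ => ((x + s, y) : ℝ × ℝ)) ((1:ℝ), (0:ℝ)) 0 :=
      ((hasDerivAt_id 0).const_add x).prodMk (hasDerivAt_const 0 y)
    have l2 : HasDerivAt (fun s : ℝ => V (x + s, y)) (fderiv ℝ V (x, y) (1, 0)) 0 := by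
      have hV' : HasFDerivAt V (fderiv ℝ V (x, y)) ((x + 0 : ℝ), y) := by
        simpa using (hV (x, y)).hasFDerivAt
      have := hV'.comp_hasDerivAt 0 l1
      simpa [Function.comp_def] using this
    have hg : HasDerivAt (fun s : ℝ => a * cos (x + s) * sin y - c * cos y)
        (-(a * sin x * sin y)) 0 := by
      have hx : HasDerivAt (fun s : ℝ => x + s) 1 0 := (hasDerivAt_id 0).const_add x
      have := (((hx.cos.const_mul a).mul_const (sin y)).sub_const (c * cos y))
      refine HasDerivAt.congr_deriv this (Eq.symm ?_)
      simp
      try ring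
    have l3 : HasDerivAt (fun s : ℝ => V (x + s, y))
        (deriv F (a * cos x * sin y - c * cos y) * (-(a * sin x * sin y))) 0 := by
      have hFd : HasDerivAt F (deriv F (a * cos x * sin y - c * cos y))
          (a * cos (x + 0) * sin y - c * cos y) := by
        simpa using (hF (a * cos x * sin y - c * cos y)).hasDerivAt
      have := hFd.comp 0 hg
      simpa [Function.comp_def, hform] using this
    exact l2.unique l3
  have hVφ : ∀ x y : ℝ, fderiv ℝ V (x, y) (0, 1)
      = deriv F (a * cos x * sin y - c * cos y) * (a * cos x * cos y + c * sin y) := by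
    intro x y
    have l1 : HasDerivAt (fun s : ℝ => ((x, y + s) : ℝ × ℝ)) ((0:ℝ), (1:ℝ)) 0 :=
      (hasDerivAt_const 0 x).prodMk ((hasDerivAt_id 0).const_add y)
    have l2 : HasDerivAt (fun s : ℝ => V (x, y + s)) (fderiv ℝ V (x, y) (0, 1)) 0 := by
      have hV' : HasFDerivAt V (fderiv ℝ V (x, y)) ((x : ℝ), y + 0) := by
        simpa using (hV (x, y)).hasFDerivAt
      have := hV'.comp_hasDerivAt 0 l1
      simpa [Function.comp_def] using this
    have hg : HasDerivAt (fun s : ℝ => a * cos x * sin (y + s) - c * cos (y + s))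
        (a * cos x * cos y + c * sin y) 0 := by
      have hy : HasDerivAt (fun s : ℝ => y + s) 1 0 := (hasDerivAt_id 0).const_add y
      have := ((hy.sin.const_mul (a * cos x)).sub (hy.cos.const_mul c))
      refine HasDerivAt.congr_deriv this (Eq.symm ?_)
      simp
      try ring
    have l3 : HasDerivAt (fun s : ℝ => V (x, y + s))
        (deriv F (a * cos x * sin y - c * cos y) * (a * cos x * cos y + c * sin y)) 0 := by
      have hFd : HasDerivAt F (deriv F (a * cos x * sin y - c * cos y))
          (a * cos x * sin (y + 0) - c * cos (y + 0)) := by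
        simpa using (hF (a * cos x * sin y - c * cos y)).hasDerivAt
      have := hFd.comp 0 hg
      simpa [Function.comp_def, hform] using this
    exact l2.unique l3
  -- the conserved quantity
  set f : ℝ → ℝ := fun t =>
    a * (φ' t * sin (θ t) + θ' t * cos (θ t) * sin (φ t) * cos (φ t))
      + c * (θ' t * sin (φ t) ^ 2) with hf
  have hI0 : ∀ t ∈ Set.Ioo t₀ t₁, HasDerivAt f 0 t := by
    intro t ht
    have hsθ : HasDerivAt (fun t => sin (θ t)) (cos (θ t) * θ' t) t := (hθ t ht).sin
    have hcθ : HasDerivAt (fun t => cos (θ t)) (-sin (θ t) * θ' t) t := (hθ t ht).cos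
    have hsφ : HasDerivAt (fun t => sin (φ t)) (cos (φ t) * φ' t) t := (hφ t ht).sin
    have hcφ : HasDerivAt (fun t => cos (φ t)) (-sin (φ t) * φ' t) t := (hφ t ht).cos
    have h1 := (hφ' t ht).mul hsθ
    have h2 := (((hθ' t ht).mul hcθ).mul hsφ).mul hcφ
    have h3 := (hθ' t ht).mul (hsφ.pow 2)
    have hI := ((h1.add h2).const_mul a).add (h3.const_mul c)
    -- show the derivative expression is zero
    have hs := hsin t ht
    set x := θ t; set y := φ t
    set d := deriv F (a * cos x * sin y - c * cos y) with hd
    have e1 : φ'' t = sin y * cos y * (θ' t) ^ 2 - d * (a * cos x * cos y + c * sin y) := by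
      have := eomφ t ht
      rw [hVφ x y] at this
      linarith
    have e2 : θ'' t = -(2 * (cos y / sin y) * θ' t * φ' t)
        - (1 / sin y ^ 2) * (d * (-(a * sin x * sin y))) := by
      have := eomθ t ht
      rw [hVθ x y] at this
      linarith
    refine HasDerivAt.congr_deriv hI (Eq.symm ?_)
    simp only [Pi.mul_apply, Pi.pow_apply]
    rw [e1, e2]
    field_simp
    linear_combination (a * sin y * θ' t * cos x * φ' t) * sin_sq_add_cos_sq y
  -- constancy on the open interval
  intro s hs t ht
  have hsub : ∀ u ∈ Set.Ioo t₀ t₁, HasDerivWithinAt f 0 (Set.Ioo t₀ t₁) u :=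
    fun u hu => (hI0 u hu).hasDerivWithinAt
  have key := Convex.norm_image_sub_le_of_norm_hasDerivWithin_le hsub
    (C := 0) (fun u hu => by simp) (convex_Ioo t₀ t₁) hs ht
  simp only [zero_mul, norm_le_zero_iff, sub_eq_zero] at key
  exact key.symm
end

section
/- Let b, c ∈ ℝ and suppose the potential of motion on the 2-sphere has the form V(θ, φ) = F(b·sin θ·sin φ + c·cos φ) for some differentiable function F : ℝ → ℝ. Then along any solution (φ(t), θ(t)) of the equations of motion on an interval where sin φ(t) ≠ 0, the quantity b·I²(t) + c·I³(t) is constant, where I² = φ̇ cos θ − θ̇ sin θ sin φ cos φ and I³ = θ̇ sin²φ. (This is the row a I_{CK²} + b I_{CK³} of Table 7.) -/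
open Real

/-- motion on the 2-sphere with potential of the form
`V(θ, φ) = F(b·sin θ·sin φ + c·cos φ)`. Along any solution on an interval where
`sin φ ≠ 0`, the combination `b·I² + c·I³` of the Noether integrals
`I² = φ̇·cos θ − θ̇·sin θ·sin φ·cos φ` and `I³ = θ̇·sin²φ` is constant. -/
theorem sphere_noether_bI2_cI3
    (b c : ℝ)
    (V : ℝ × ℝ → ℝ) (hV : Differentiable ℝ V)
    (F : ℝ → ℝ) (hF : Differentiable ℝ F)
    (hform : ∀ p : ℝ × ℝ, V p = F (b * sin p.1 * sin p.2 + c * cos p.2))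
    (t₀ t₁ : ℝ) (φ θ φ' θ' φ'' θ'' : ℝ → ℝ)
    (hφ : ∀ t ∈ Set.Ioo t₀ t₁, HasDerivAt φ (φ' t) t)
    (hφ' : ∀ t ∈ Set.Ioo t₀ t₁, HasDerivAt φ' (φ'' t) t)
    (hθ : ∀ t ∈ Set.Ioo t₀ t₁, HasDerivAt θ (θ' t) t)
    (hθ' : ∀ t ∈ Set.Ioo t₀ t₁, HasDerivAt θ' (θ'' t) t)
    (hsin : ∀ t ∈ Set.Ioo t₀ t₁, sin (φ t) ≠ 0)
    (eomφ : ∀ t ∈ Set.Ioo t₀ t₁,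
      φ'' t - sin (φ t) * cos (φ t) * (θ' t) ^ 2
        + fderiv ℝ V (θ t, φ t) (0, 1) = 0)
    (eomθ : ∀ t ∈ Set.Ioo t₀ t₁,
      θ'' t + 2 * (cos (φ t) / sin (φ t)) * θ' t * φ' t
        + (1 / sin (φ t) ^ 2) * fderiv ℝ V (θ t, φ t) (1, 0) = 0) :
    ∀ s ∈ Set.Ioo t₀ t₁, ∀ t ∈ Set.Ioo t₀ t₁,
      b * (φ' s * cos (θ s) - θ' s * sin (θ s) * sin (φ s) * cos (φ s))
          + c * (θ' s * sin (φ s) ^ 2) =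
      b * (φ' t * cos (θ t) - θ' t * sin (θ t) * sin (φ t) * cos (φ t))
          + c * (θ' t * sin (φ t) ^ 2) := by
  -- partial derivatives of V
  have hVd : ∀ p : ℝ × ℝ,
      fderiv ℝ V p (1, 0)
        = deriv F (b * sin p.1 * sin p.2 + c * cos p.2) * (b * cos p.1 * sin p.2) ∧
      fderiv ℝ V p (0, 1)
        = deriv F (b * sin p.1 * sin p.2 + c * cos p.2)
            * (b * sin p.1 * cos p.2 - c * sin p.2) := by
    intro p
    set u := b * sin p.1 * sin p.2 + c * cos p.2 with hu
    constructor
    · have h1 : HasDerivAt (fun x => V (x, p.2)) (fderiv ℝ V p (1, 0)) p.1 := by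
        have := (hV p).hasFDerivAt.comp_hasDerivAt p.1
          ((hasDerivAt_id p.1).prodMk (hasDerivAt_const p.1 p.2))
        simpa [Function.comp_def] using this
      have h2 : HasDerivAt (fun x => V (x, p.2)) (deriv F u * (b * cos p.1 * sin p.2)) p.1 := by
        have heq : (fun x => V (x, p.2)) = fun x => F (b * sin x * sin p.2 + c * cos p.2) :=
          funext fun x => hform (x, p.2)
        rw [heq]
        have hin : HasDerivAt (fun x => b * sin x * sin p.2 + c * cos p.2)
            (b * cos p.1 * sin p.2) p.1 := by
          simpa [mul_assoc] using
            ((((Real.hasDerivAt_sin p.1).const_mul b).mul_const (sin p.2)).add_const (c * cos p.2))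
        simpa [hu, Function.comp_def] using ((hF _).hasDerivAt.comp p.1 hin)
      exact h1.unique h2
    · have h1 : HasDerivAt (fun y => V (p.1, y)) (fderiv ℝ V p (0, 1)) p.2 := by
        have := (hV p).hasFDerivAt.comp_hasDerivAt p.2
          ((hasDerivAt_const p.2 p.1).prodMk (hasDerivAt_id p.2))
        simpa [Function.comp_def] using this
      have h2 : HasDerivAt (fun y => V (p.1, y))
          (deriv F u * (b * sin p.1 * cos p.2 - c * sin p.2)) p.2 := by
        have heq : (fun y => V (p.1, y)) = fun y => F (b * sin p.1 * sin y + c * cos y) :=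
          funext fun y => hform (p.1, y)
        rw [heq]
        have hin : HasDerivAt (fun y => b * sin p.1 * sin y + c * cos y)
            (b * sin p.1 * cos p.2 - c * sin p.2) p.2 := by
          have := ((Real.hasDerivAt_sin p.2).const_mul (b * sin p.1)).add
            ((Real.hasDerivAt_cos p.2).const_mul c)
          simpa [mul_comm, sub_eq_add_neg, mul_assoc, Pi.add_def] using this
        simpa [hu, Function.comp_def] using ((hF _).hasDerivAt.comp p.2 hin)
      exact h1.unique h2
  set G : ℝ → ℝ := fun t =>
    b * (φ' t * cos (θ t) - θ' t * sin (θ t) * sin (φ t) * cos (φ t))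
      + c * (θ' t * sin (φ t) ^ 2) with hG
  have hG0 : ∀ t ∈ Set.Ioo t₀ t₁, HasDerivAt G 0 t := by
    intro t ht
    have hsφ := hsin t ht
    set k := deriv F (b * sin (θ t) * sin (φ t) + c * cos (φ t)) with hk
    have hVθ : fderiv ℝ V (θ t, φ t) (1, 0) = k * (b * cos (θ t) * sin (φ t)) := by
      simpa [hk] using (hVd (θ t, φ t)).1
    have hVφ : fderiv ℝ V (θ t, φ t) (0, 1)
        = k * (b * sin (θ t) * cos (φ t) - c * sin (φ t)) := by
      simpa [hk] using (hVd (θ t, φ t)).2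
    have hφ2 : φ'' t = sin (φ t) * cos (φ t) * (θ' t) ^ 2
        - k * (b * sin (θ t) * cos (φ t) - c * sin (φ t)) := by
      have h := eomφ t ht; rw [hVφ] at h; linarith
    have hθ2m : θ'' t * sin (φ t)
        = -(2 * cos (φ t) * θ' t * φ' t) - k * b * cos (θ t) := by
      have h := eomθ t ht; rw [hVθ] at h
      have h' : θ'' t = -(2 * (cos (φ t) / sin (φ t)) * θ' t * φ' t)
          - (1 / sin (φ t) ^ 2) * (k * (b * cos (θ t) * sin (φ t))) := by linarith
      rw [h']; field_simp
    have hD : HasDerivAt G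
        (b * ((φ'' t * cos (θ t) + φ' t * (-sin (θ t) * θ' t))
            - (((θ'' t * sin (θ t) + θ' t * (cos (θ t) * θ' t)) * sin (φ t)
                + (θ' t * sin (θ t)) * (cos (φ t) * φ' t)) * cos (φ t)
              + (θ' t * sin (θ t) * sin (φ t)) * (-sin (φ t) * φ' t)))
          + c * (θ'' t * sin (φ t) ^ 2
            + θ' t * (2 * sin (φ t) * (cos (φ t) * φ' t)))) t := by
      have hsinθ : HasDerivAt (fun t => sin (θ t)) (cos (θ t) * θ' t) t := (hθ t ht).sin
      have hcosθ : HasDerivAt (fun t => cos (θ t)) (-sin (θ t) * θ' t) t := (hθ t ht).cos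
      have hsinφ : HasDerivAt (fun t => sin (φ t)) (cos (φ t) * φ' t) t := (hφ t ht).sin
      have hcosφ : HasDerivAt (fun t => cos (φ t)) (-sin (φ t) * φ' t) t := (hφ t ht).cos
      have h1 : HasDerivAt (fun t => φ' t * cos (θ t))
          (φ'' t * cos (θ t) + φ' t * (-sin (θ t) * θ' t)) t := (hφ' t ht).mul hcosθ
      have h2 : HasDerivAt (fun t => θ' t * sin (θ t))
          (θ'' t * sin (θ t) + θ' t * (cos (θ t) * θ' t)) t := (hθ' t ht).mul hsinθ
      have h3 : HasDerivAt (fun t => θ' t * sin (θ t) * sin (φ t))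
          ((θ'' t * sin (θ t) + θ' t * (cos (θ t) * θ' t)) * sin (φ t)
            + (θ' t * sin (θ t)) * (cos (φ t) * φ' t)) t := h2.mul hsinφ
      have h4 : HasDerivAt (fun t => θ' t * sin (θ t) * sin (φ t) * cos (φ t))
          (((θ'' t * sin (θ t) + θ' t * (cos (θ t) * θ' t)) * sin (φ t)
              + (θ' t * sin (θ t)) * (cos (φ t) * φ' t)) * cos (φ t)
            + (θ' t * sin (θ t) * sin (φ t)) * (-sin (φ t) * φ' t)) t := h3.mul hcosφ
      have h5 : HasDerivAt (fun t => sin (φ t) ^ 2)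
          (2 * sin (φ t) * (cos (φ t) * φ' t)) t := by
        simpa [Pi.pow_def] using (hsinφ.pow 2)
      have h6 : HasDerivAt (fun t => θ' t * sin (φ t) ^ 2)
          (θ'' t * sin (φ t) ^ 2 + θ' t * (2 * sin (φ t) * (cos (φ t) * φ' t))) t :=
        (hθ' t ht).mul h5
      exact ((h1.sub h4).const_mul b).add (h6.const_mul c)
    convert hD using 1
    linear_combination (-(b * cos (θ t))) * hφ2
      + (b * sin (θ t) * cos (φ t) - c * sin (φ t)) * hθ2m
      + (-(b * sin (θ t) * θ' t * φ' t)) * sin_sq_add_cos_sq (φ t)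
  intro s hs t ht
  have hconv : Convex ℝ (Set.Ioo t₀ t₁) := convex_Ioo t₀ t₁
  have hdiff : DifferentiableOn ℝ G (Set.Ioo t₀ t₁) :=
    fun x hx => ((hG0 x hx).differentiableAt).differentiableWithinAt
  have hzero : ∀ x ∈ Set.Ioo t₀ t₁, fderivWithin ℝ G (Set.Ioo t₀ t₁) x = 0 := by
    intro x hx
    rw [fderivWithin_of_isOpen isOpen_Ioo hx, (hG0 x hx).hasFDerivAt.fderiv]
    exact ContinuousLinearMap.ext fun y => by simp
  exact hconv.is_const_of_fderivWithin_eq_zero hdiff hzero hs ht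
end

section
/- Let a, b, c ∈ ℝ and suppose the potential of motion on the 2-sphere has the form V(θ, φ) = F((a·cos θ − b·sin θ)·sin φ − c·cos φ) for some differentiable function F : ℝ → ℝ. Then along any solution (φ(t), θ(t)) of the equations of motion on an interval where sin φ(t) ≠ 0, the quantity a·I¹(t) + b·I²(t) + c·I³(t) is constant, where I¹ = φ̇ sin θ + θ̇ cos θ sin φ cos φ, I² = φ̇ cos θ − θ̇ sin θ sin φ cos φ and I³ = θ̇ sin²φ. (This is the last row of Table 7, the general linear combination a I_{CK¹} + b I_{CK²} + c I_{CK³}.) -/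
open Real

lemma pd2 (a b c : ℝ) (V : ℝ × ℝ → ℝ) (hV : Differentiable ℝ V)
    (F : ℝ → ℝ) (hF : Differentiable ℝ F)
    (hform : ∀ p : ℝ × ℝ, V p = F ((a * cos p.1 - b * sin p.1) * sin p.2 - c * cos p.2))
    (x y : ℝ) :
    fderiv ℝ V (x, y) (0, 1) =
      deriv F ((a * cos x - b * sin x) * sin y - c * cos y) *
        ((a * cos x - b * sin x) * cos y + c * sin y) := by
  have h1 : HasDerivAt (fun s : ℝ => V (x, s)) (fderiv ℝ V (x, y) (0, 1)) y := by
    have := (hV (x, y)).hasFDerivAt.comp_hasDerivAt y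
      ((hasDerivAt_const y x).prodMk (hasDerivAt_id y))
    simpa [Function.comp_def] using this
  have h2 : HasDerivAt (fun s : ℝ => V (x, s))
      (deriv F ((a * cos x - b * sin x) * sin y - c * cos y) *
        ((a * cos x - b * sin x) * cos y + c * sin y)) y := by
    have hin : HasDerivAt (fun s : ℝ => (a * cos x - b * sin x) * sin s - c * cos s)
        ((a * cos x - b * sin x) * cos y + c * sin y) y := by
      have := ((Real.hasDerivAt_sin y).const_mul (a * cos x - b * sin x)).sub
        ((Real.hasDerivAt_cos y).const_mul c)
      exact this.congr_deriv (by ring)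
    have := ((hF _).hasDerivAt).comp y hin
    simpa [hform, Function.comp_def] using this
  exact h1.unique h2

lemma pd1 (a b c : ℝ) (V : ℝ × ℝ → ℝ) (hV : Differentiable ℝ V)
    (F : ℝ → ℝ) (hF : Differentiable ℝ F)
    (hform : ∀ p : ℝ × ℝ, V p = F ((a * cos p.1 - b * sin p.1) * sin p.2 - c * cos p.2))
    (x y : ℝ) :
    fderiv ℝ V (x, y) (1, 0) =
      deriv F ((a * cos x - b * sin x) * sin y - c * cos y) *
        ((-(a * sin x) - b * cos x) * sin y) := by
  have h1 : HasDerivAt (fun s : ℝ => V (s, y)) (fderiv ℝ V (x, y) (1, 0)) x := by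
    have := (hV (x, y)).hasFDerivAt.comp_hasDerivAt x
      ((hasDerivAt_id x).prodMk (hasDerivAt_const x y))
    simpa [Function.comp_def] using this
  have h2 : HasDerivAt (fun s : ℝ => V (s, y))
      (deriv F ((a * cos x - b * sin x) * sin y - c * cos y) *
        ((-(a * sin x) - b * cos x) * sin y)) x := by
    have hin : HasDerivAt (fun s : ℝ => (a * cos s - b * sin s) * sin y - c * cos y)
        ((-(a * sin x) - b * cos x) * sin y) x := by
      have := ((((Real.hasDerivAt_cos x).const_mul a).sub
        ((Real.hasDerivAt_sin x).const_mul b)).mul_const (sin y)).sub_const (c * cos y)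
      exact this.congr_deriv (by ring)
    have := ((hF _).hasDerivAt).comp x hin
    simpa [hform, Function.comp_def] using this
  exact h1.unique h2

/-- motion on the 2-sphere with potential of the form
`V(θ, φ) = F((a·cos θ − b·sin θ)·sin φ − c·cos φ)`. Along any solution on an interval
where `sin φ ≠ 0`, the general linear combination `a·I¹ + b·I² + c·I³` of the Noether
integrals `I¹ = φ̇·sin θ + θ̇·cos θ·sin φ·cos φ`, `I² = φ̇·cos θ − θ̇·sin θ·sin φ·cos φ`
and `I³ = θ̇·sin²φ` is constant. -/
theorem sphere_noether_aI1_bI2_cI3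
    (a b c : ℝ)
    (V : ℝ × ℝ → ℝ) (hV : Differentiable ℝ V)
    (F : ℝ → ℝ) (hF : Differentiable ℝ F)
    (hform : ∀ p : ℝ × ℝ,
      V p = F ((a * cos p.1 - b * sin p.1) * sin p.2 - c * cos p.2))
    (t₀ t₁ : ℝ) (φ θ φ' θ' φ'' θ'' : ℝ → ℝ)
    (hφ : ∀ t ∈ Set.Ioo t₀ t₁, HasDerivAt φ (φ' t) t)
    (hφ' : ∀ t ∈ Set.Ioo t₀ t₁, HasDerivAt φ' (φ'' t) t)
    (hθ : ∀ t ∈ Set.Ioo t₀ t₁, HasDerivAt θ (θ' t) t)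
    (hθ' : ∀ t ∈ Set.Ioo t₀ t₁, HasDerivAt θ' (θ'' t) t)
    (hsin : ∀ t ∈ Set.Ioo t₀ t₁, sin (φ t) ≠ 0)
    (eomφ : ∀ t ∈ Set.Ioo t₀ t₁,
      φ'' t - sin (φ t) * cos (φ t) * (θ' t) ^ 2
        + fderiv ℝ V (θ t, φ t) (0, 1) = 0)
    (eomθ : ∀ t ∈ Set.Ioo t₀ t₁,
      θ'' t + 2 * (cos (φ t) / sin (φ t)) * θ' t * φ' t
        + (1 / sin (φ t) ^ 2) * fderiv ℝ V (θ t, φ t) (1, 0) = 0) :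
    ∀ s ∈ Set.Ioo t₀ t₁, ∀ t ∈ Set.Ioo t₀ t₁,
      a * (φ' s * sin (θ s) + θ' s * cos (θ s) * sin (φ s) * cos (φ s))
          + b * (φ' s * cos (θ s) - θ' s * sin (θ s) * sin (φ s) * cos (φ s))
          + c * (θ' s * sin (φ s) ^ 2) =
      a * (φ' t * sin (θ t) + θ' t * cos (θ t) * sin (φ t) * cos (φ t))
          + b * (φ' t * cos (θ t) - θ' t * sin (θ t) * sin (φ t) * cos (φ t))
          + c * (θ' t * sin (φ t) ^ 2) := by
  set G : ℝ → ℝ := fun t =>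
    a * (φ' t * sin (θ t) + θ' t * cos (θ t) * sin (φ t) * cos (φ t))
      + b * (φ' t * cos (θ t) - θ' t * sin (θ t) * sin (φ t) * cos (φ t))
      + c * (θ' t * sin (φ t) ^ 2) with hG
  have hG0 : ∀ t ∈ Set.Ioo t₀ t₁, HasDerivAt G 0 t := by
    intro t ht
    have hφt := hφ t ht; have hφ't := hφ' t ht
    have hθt := hθ t ht; have hθ't := hθ' t ht
    have hst := hsin t ht
    have hsθ : HasDerivAt (fun u => sin (θ u)) (cos (θ t) * θ' t) t :=
      (Real.hasDerivAt_sin (θ t)).comp t hθt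
    have hcθ : HasDerivAt (fun u => cos (θ u)) (-sin (θ t) * θ' t) t :=
      (Real.hasDerivAt_cos (θ t)).comp t hθt
    have hsφ : HasDerivAt (fun u => sin (φ u)) (cos (φ t) * φ' t) t :=
      (Real.hasDerivAt_sin (φ t)).comp t hφt
    have hcφ : HasDerivAt (fun u => cos (φ u)) (-sin (φ t) * φ' t) t :=
      (Real.hasDerivAt_cos (φ t)).comp t hφt
    have hD := ((((hφ't.mul hsθ).add
          ((((hθ't.mul hcθ).mul hsφ).mul hcφ))).const_mul a).add
        ((((hφ't.mul hcθ).sub ((((hθ't.mul hsθ).mul hsφ).mul hcφ))).const_mul b))).add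
          ((hθ't.mul (hsφ.pow 2)).const_mul c)
    rw [hG]
    have hVφ := pd2 a b c V hV F hF hform (θ t) (φ t)
    have hVθ := pd1 a b c V hV F hF hform (θ t) (φ t)
    have e1 := eomφ t ht
    have e2 := eomθ t ht
    rw [hVφ] at e1
    rw [hVθ] at e2
    have hφ'' : φ'' t = sin (φ t) * cos (φ t) * (θ' t) ^ 2
        - deriv F ((a * cos (θ t) - b * sin (θ t)) * sin (φ t) - c * cos (φ t)) *
          ((a * cos (θ t) - b * sin (θ t)) * cos (φ t) + c * sin (φ t)) := by
      linarith
    have e2s : θ'' t * sin (φ t) = -(2 * cos (φ t) * θ' t * φ' t)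
        + deriv F ((a * cos (θ t) - b * sin (θ t)) * sin (φ t) - c * cos (φ t)) *
          (a * sin (θ t) + b * cos (θ t)) := by
      have h2 : (cos (φ t) / sin (φ t)) * sin (φ t) = cos (φ t) := div_mul_cancel₀ _ hst
      have h3 : (1 / sin (φ t) ^ 2) * sin (φ t) ^ 2 = 1 := by field_simp
      linear_combination sin (φ t) * e2 - 2 * θ' t * φ' t * h2
        + deriv F ((a * cos (θ t) - b * sin (θ t)) * sin (φ t) - c * cos (φ t)) *
          (a * sin (θ t) + b * cos (θ t)) * h3
    have hpyth : sin (φ t) ^ 2 + cos (φ t) ^ 2 = 1 := sin_sq_add_cos_sq (φ t)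
    refine hD.congr_deriv ?_
    symm
    norm_num only [Pi.mul_apply, Pi.pow_apply]
    rw [hφ'']
    linear_combination (-(a * cos (θ t) * cos (φ t) - b * sin (θ t) * cos (φ t)
        + c * sin (φ t))) * e2s
      + ((a * cos (θ t) - b * sin (θ t)) * φ' t * θ' t) * hpyth
  intro s hs t ht
  have key : ∀ p ∈ Set.Ioo t₀ t₁, ∀ q ∈ Set.Ioo t₀ t₁, p ≤ q → G q = G p := by
    intro p hp q hq hpq
    have hsub : Set.Icc p q ⊆ Set.Ioo t₀ t₁ := fun x hx =>
      ⟨lt_of_lt_of_le hp.1 hx.1, lt_of_le_of_lt hx.2 hq.2⟩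
    have hcont : ContinuousOn G (Set.Icc p q) := fun x hx =>
      ((hG0 x (hsub hx)).continuousAt).continuousWithinAt
    have hderiv : ∀ x ∈ Set.Ico p q, HasDerivWithinAt G 0 (Set.Ici x) x := fun x hx =>
      (hG0 x (hsub ⟨hx.1, le_of_lt hx.2⟩)).hasDerivWithinAt
    exact constant_of_has_deriv_right_zero hcont hderiv q ⟨hpq, le_rfl⟩
  rcases le_total s t with h | h
  · exact (key s hs t ht h).symm
  · exact key t ht s hs h
end

section
/- Suppose the potential of motion on the hyperbolic plane (the case K = −1) has the form V(θ, φ) = F(cos θ · sinh φ) for some differentiable function F : ℝ → ℝ. Then along any solution (φ(t), θ(t)) of the hyperbolic equations of motion on an interval where sinh φ(t) ≠ 0, the quantity I¹_h(t) = φ̇(t)·sin θ(t) + θ̇(t)·cos θ(t)·sinh φ(t)·cosh φ(t) is constant. -/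
open Real

lemma hyp_fderiv (F : ℝ → ℝ) (hF : Differentiable ℝ F) (a b : ℝ) :
    HasFDerivAt (fun p : ℝ × ℝ => F (cos p.1 * sinh p.2))
      ((deriv F (cos a * sinh b)) •
        (cos a • (cosh b • (ContinuousLinearMap.snd ℝ ℝ ℝ)) +
          sinh b • ((-sin a) • (ContinuousLinearMap.fst ℝ ℝ ℝ)))) (a, b) := by
  have h1 : HasFDerivAt (fun p : ℝ × ℝ => cos p.1)
      ((-sin a) • (ContinuousLinearMap.fst ℝ ℝ ℝ)) (a, b) :=
    by have := (Real.hasDerivAt_cos a).comp_hasFDerivAt (a, b) (hasFDerivAt_fst (𝕜 := ℝ) (p := (a, b))); exact this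
  have h2 : HasFDerivAt (fun p : ℝ × ℝ => sinh p.2)
      (cosh b • (ContinuousLinearMap.snd ℝ ℝ ℝ)) (a, b) :=
    by have := (Real.hasDerivAt_sinh b).comp_hasFDerivAt (a, b) (hasFDerivAt_snd (𝕜 := ℝ) (p := (a, b))); exact this
  have hg := h1.mul h2
  exact ((hF (cos a * sinh b)).hasDerivAt).comp_hasFDerivAt (a, b) hg

lemma hyp_fderiv_apply (F : ℝ → ℝ) (hF : Differentiable ℝ F) (a b x y : ℝ) :
    fderiv ℝ (fun p : ℝ × ℝ => F (cos p.1 * sinh p.2)) (a, b) (x, y) =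
      deriv F (cos a * sinh b) * (cos a * cosh b * y - sin a * sinh b * x) := by
  rw [(hyp_fderiv F hF a b).fderiv]
  simp [ContinuousLinearMap.smul_apply]
  ring

/-- motion on the hyperbolic plane (`K = −1`) with potential of the form
`V(θ, φ) = F(cos θ · sinh φ)`. Along any solution of the hyperbolic equations of motion
on an interval where `sinh φ ≠ 0`, the Noether integral
`I¹_h = φ̇·sin θ + θ̇·cos θ·sinh φ·cosh φ` is constant. -/
theorem hyperbolic_noether_I1
    (V : ℝ × ℝ → ℝ) (hV : Differentiable ℝ V)
    (F : ℝ → ℝ) (hF : Differentiable ℝ F)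
    (hform : ∀ p : ℝ × ℝ, V p = F (cos p.1 * sinh p.2))
    (t₀ t₁ : ℝ) (φ θ φ' θ' φ'' θ'' : ℝ → ℝ)
    (hφ : ∀ t ∈ Set.Ioo t₀ t₁, HasDerivAt φ (φ' t) t)
    (hφ' : ∀ t ∈ Set.Ioo t₀ t₁, HasDerivAt φ' (φ'' t) t)
    (hθ : ∀ t ∈ Set.Ioo t₀ t₁, HasDerivAt θ (θ' t) t)
    (hθ' : ∀ t ∈ Set.Ioo t₀ t₁, HasDerivAt θ' (θ'' t) t)
    (hsinh : ∀ t ∈ Set.Ioo t₀ t₁, sinh (φ t) ≠ 0)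
    (eomφ : ∀ t ∈ Set.Ioo t₀ t₁,
      φ'' t - sinh (φ t) * cosh (φ t) * (θ' t) ^ 2
        + fderiv ℝ V (θ t, φ t) (0, 1) = 0)
    (eomθ : ∀ t ∈ Set.Ioo t₀ t₁,
      θ'' t + 2 * (cosh (φ t) / sinh (φ t)) * θ' t * φ' t
        + (1 / sinh (φ t) ^ 2) * fderiv ℝ V (θ t, φ t) (1, 0) = 0) :
    ∀ s ∈ Set.Ioo t₀ t₁, ∀ t ∈ Set.Ioo t₀ t₁,
      φ' s * sin (θ s) + θ' s * cos (θ s) * sinh (φ s) * cosh (φ s) =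
      φ' t * sin (θ t) + θ' t * cos (θ t) * sinh (φ t) * cosh (φ t) := by
  have hVeq : V = fun p : ℝ × ℝ => F (cos p.1 * sinh p.2) := funext hform
  subst hVeq
  set I : ℝ → ℝ := fun u =>
    φ' u * sin (θ u) + θ' u * cos (θ u) * sinh (φ u) * cosh (φ u) with hIdef
  have hder : ∀ t ∈ Set.Ioo t₀ t₁, HasDerivAt I 0 t := by
    intro t ht
    have hs := hsinh t ht
    set c := deriv F (cos (θ t) * sinh (φ t)) with hc
    have e1 := eomφ t ht
    rw [hyp_fderiv_apply F hF] at e1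
    have e2 := eomθ t ht
    rw [hyp_fderiv_apply F hF] at e2
    have hφ2 : φ'' t = sinh (φ t) * cosh (φ t) * (θ' t) ^ 2
        - c * (cos (θ t) * cosh (φ t)) := by linear_combination e1
    have hθ2 : θ'' t * sinh (φ t) =
        -(2 * cosh (φ t) * θ' t * φ' t) + c * sin (θ t) := by
      field_simp at e2
      rw [mul_comm (sinh (φ t)) (cos (θ t)), ← hc] at e2
      refine mul_right_cancel₀ (pow_ne_zero 2 hs) ?_
      linear_combination (sinh (φ t)) * e2
    have hch : cosh (φ t) ^ 2 = sinh (φ t) ^ 2 + 1 := cosh_sq (φ t)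
    have h1 : HasDerivAt (fun u => φ' u * sin (θ u))
        (φ'' t * sin (θ t) + φ' t * (cos (θ t) * θ' t)) t :=
      (hφ' t ht).mul ((hθ t ht).sin)
    have h2 := ((((hθ' t ht).mul ((hθ t ht).cos)).mul
      ((hφ t ht).sinh)).mul ((hφ t ht).cosh))
    have h3 := h1.add h2
    convert h3 using 1
    · rfl
    · rfl
    · rfl
    simp only [Pi.mul_apply]
    linear_combination (-(sin (θ t))) * hφ2
      + (-(cos (θ t) * cosh (φ t))) * hθ2
      + (θ' t * φ' t * cos (θ t)) * hch
  intro s hs t ht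
  have hconv : Convex ℝ (Set.Ioo t₀ t₁) := convex_Ioo t₀ t₁
  have hdiff : DifferentiableOn ℝ I (Set.Ioo t₀ t₁) := fun x hx =>
    ((hder x hx).differentiableAt).differentiableWithinAt
  have hfz : ∀ x ∈ Set.Ioo t₀ t₁, fderivWithin ℝ I (Set.Ioo t₀ t₁) x = 0 := by
    intro x hx
    have : fderivWithin ℝ I (Set.Ioo t₀ t₁) x = fderiv ℝ I x :=
      fderivWithin_of_isOpen isOpen_Ioo hx
    rw [this, (hder x hx).hasFDerivAt.fderiv]
    ext
    simp
  exact hconv.is_const_of_fderivWithin_eq_zero hdiff hfz hs ht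
end

section
/- Let a, b, c ∈ ℝ and suppose the potential of motion on the hyperbolic plane has the form V(θ, φ) = F((a·cos θ − b·sin θ)·sinh φ + c·cosh φ) for some differentiable function F : ℝ → ℝ. Then along any solution (φ(t), θ(t)) of the hyperbolic equations of motion on an interval where sinh φ(t) ≠ 0, the quantity a·I¹_h(t) + b·I²_h(t) + c·I³_h(t) is constant, where I¹_h = φ̇ sin θ + θ̇ cos θ sinh φ cosh φ, I²_h = φ̇ cos θ − θ̇ sin θ sinh φ cosh φ, and I³_h = θ̇ sinh²φ. (This is the last row of Table 7 in the case K = −1.) -/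
open Real

/-- motion on the hyperbolic plane (`K = −1`) with potential of the form
`V(θ, φ) = F((a·cos θ − b·sin θ)·sinh φ + c·cosh φ)`. Along any solution of the
hyperbolic equations of motion on an interval where `sinh φ ≠ 0`, the combination
`a·I¹_h + b·I²_h + c·I³_h` of the Noether integrals
`I¹_h = φ̇·sin θ + θ̇·cos θ·sinh φ·cosh φ`, `I²_h = φ̇·cos θ − θ̇·sin θ·sinh φ·cosh φ`
and `I³_h = θ̇·sinh²φ` is constant. -/
theorem hyperbolic_noether_aI1_bI2_cI3
    (a b c : ℝ)
    (V : ℝ × ℝ → ℝ) (hV : Differentiable ℝ V)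
    (F : ℝ → ℝ) (hF : Differentiable ℝ F)
    (hform : ∀ p : ℝ × ℝ,
      V p = F ((a * cos p.1 - b * sin p.1) * sinh p.2 + c * cosh p.2))
    (t₀ t₁ : ℝ) (φ θ φ' θ' φ'' θ'' : ℝ → ℝ)
    (hφ : ∀ t ∈ Set.Ioo t₀ t₁, HasDerivAt φ (φ' t) t)
    (hφ' : ∀ t ∈ Set.Ioo t₀ t₁, HasDerivAt φ' (φ'' t) t)
    (hθ : ∀ t ∈ Set.Ioo t₀ t₁, HasDerivAt θ (θ' t) t)
    (hθ' : ∀ t ∈ Set.Ioo t₀ t₁, HasDerivAt θ' (θ'' t) t)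
    (hsinh : ∀ t ∈ Set.Ioo t₀ t₁, sinh (φ t) ≠ 0)
    (eomφ : ∀ t ∈ Set.Ioo t₀ t₁,
      φ'' t - sinh (φ t) * cosh (φ t) * (θ' t) ^ 2
        + fderiv ℝ V (θ t, φ t) (0, 1) = 0)
    (eomθ : ∀ t ∈ Set.Ioo t₀ t₁,
      θ'' t + 2 * (cosh (φ t) / sinh (φ t)) * θ' t * φ' t
        + (1 / sinh (φ t) ^ 2) * fderiv ℝ V (θ t, φ t) (1, 0) = 0) :
    ∀ s ∈ Set.Ioo t₀ t₁, ∀ t ∈ Set.Ioo t₀ t₁,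
      a * (φ' s * sin (θ s) + θ' s * cos (θ s) * sinh (φ s) * cosh (φ s))
          + b * (φ' s * cos (θ s) - θ' s * sin (θ s) * sinh (φ s) * cosh (φ s))
          + c * (θ' s * sinh (φ s) ^ 2) =
      a * (φ' t * sin (θ t) + θ' t * cos (θ t) * sinh (φ t) * cosh (φ t))
          + b * (φ' t * cos (θ t) - θ' t * sin (θ t) * sinh (φ t) * cosh (φ t))
          + c * (θ' t * sinh (φ t) ^ 2) := by
  -- fderivs of V
  have hVd : ∀ x y : ℝ,
      fderiv ℝ V (x, y) (0, 1) =
        deriv F ((a * cos x - b * sin x) * sinh y + c * cosh y) *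
          ((a * cos x - b * sin x) * cosh y + c * sinh y) ∧
      fderiv ℝ V (x, y) (1, 0) =
        deriv F ((a * cos x - b * sin x) * sinh y + c * cosh y) *
          ((-(a * sin x) - b * cos x) * sinh y) := by
    intro x y
    have hcos : HasFDerivAt (fun q : ℝ × ℝ => Real.cos q.1)
        ((-Real.sin x) • ContinuousLinearMap.fst ℝ ℝ ℝ) (x, y) :=
      ((Real.hasDerivAt_cos x).comp_hasFDerivAt (x, y) (hasFDerivAt_fst (𝕜 := ℝ) (p := (x, y)) (E := ℝ) (F := ℝ)) :)
    have hsin : HasFDerivAt (fun q : ℝ × ℝ => Real.sin q.1)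
        ((Real.cos x) • ContinuousLinearMap.fst ℝ ℝ ℝ) (x, y) :=
      ((Real.hasDerivAt_sin x).comp_hasFDerivAt (x, y) (hasFDerivAt_fst (𝕜 := ℝ) (p := (x, y)) (E := ℝ) (F := ℝ)) :)
    have hsh : HasFDerivAt (fun q : ℝ × ℝ => Real.sinh q.2)
        ((Real.cosh y) • ContinuousLinearMap.snd ℝ ℝ ℝ) (x, y) :=
      ((Real.hasDerivAt_sinh y).comp_hasFDerivAt (x, y) (hasFDerivAt_snd (𝕜 := ℝ) (p := (x, y)) (E := ℝ) (F := ℝ)) :)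
    have hch : HasFDerivAt (fun q : ℝ × ℝ => Real.cosh q.2)
        ((Real.sinh y) • ContinuousLinearMap.snd ℝ ℝ ℝ) (x, y) :=
      ((Real.hasDerivAt_cosh y).comp_hasFDerivAt (x, y) (hasFDerivAt_snd (𝕜 := ℝ) (p := (x, y)) (E := ℝ) (F := ℝ)) :)
    have hg := (((hcos.const_mul a).sub (hsin.const_mul b)).mul hsh).add (hch.const_mul c)
    have hVF := (hF _).hasDerivAt.comp_hasFDerivAt (x, y) hg
    have hVeq : V = ((F ∘ fun q : ℝ × ℝ =>
        (a * Real.cos q.1 - b * Real.sin q.1) * Real.sinh q.2 + c * Real.cosh q.2)) :=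
      funext fun q => hform q
    rw [hVeq, (show HasFDerivAt (F ∘ fun q : ℝ × ℝ =>
        (a * Real.cos q.1 - b * Real.sin q.1) * Real.sinh q.2 + c * Real.cosh q.2) _ (x, y) from hVF).fderiv]
    refine ⟨?_, ?_⟩ <;>
    · simp only [ContinuousLinearMap.smul_apply, ContinuousLinearMap.add_apply,
        ContinuousLinearMap.sub_apply, ContinuousLinearMap.coe_fst', ContinuousLinearMap.coe_snd',
        smul_eq_mul, Pi.add_apply, Pi.sub_apply, Pi.mul_apply]
      ring
  set f : ℝ → ℝ := fun t =>
      a * (φ' t * sin (θ t) + θ' t * cos (θ t) * sinh (φ t) * cosh (φ t))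
          + b * (φ' t * cos (θ t) - θ' t * sin (θ t) * sinh (φ t) * cosh (φ t))
          + c * (θ' t * sinh (φ t) ^ 2) with hf
  have hd : ∀ τ ∈ Set.Ioo t₀ t₁, HasDerivAt f 0 τ := by
    intro τ hτ
    have hS : HasDerivAt (fun t => Real.sin (θ t)) (Real.cos (θ τ) * θ' τ) τ :=
      (Real.hasDerivAt_sin (θ τ)).comp τ (hθ τ hτ)
    have hC : HasDerivAt (fun t => Real.cos (θ t)) (-Real.sin (θ τ) * θ' τ) τ :=
      (Real.hasDerivAt_cos (θ τ)).comp τ (hθ τ hτ)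
    have hSh : HasDerivAt (fun t => Real.sinh (φ t)) (Real.cosh (φ τ) * φ' τ) τ :=
      (Real.hasDerivAt_sinh (φ τ)).comp τ (hφ τ hτ)
    have hCh : HasDerivAt (fun t => Real.cosh (φ t)) (Real.sinh (φ τ) * φ' τ) τ :=
      (Real.hasDerivAt_cosh (φ τ)).comp τ (hφ τ hτ)
    have H := (((((hφ' τ hτ).mul hS).add ((((hθ' τ hτ).mul hC).mul hSh).mul hCh)).const_mul a).add
        ((((hφ' τ hτ).mul hC).sub ((((hθ' τ hτ).mul hS).mul hSh).mul hCh)).const_mul b)).add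
        (((hθ' τ hτ).mul (hSh.pow 2)).const_mul c)
    convert H using 1
    · rfl
    · rfl
    · rfl
    have hsne := hsinh τ hτ
    have hφ'' : φ'' τ = sinh (φ τ) * cosh (φ τ) * (θ' τ) ^ 2
        - fderiv ℝ V (θ τ, φ τ) (0, 1) := by linarith [eomφ τ hτ]
    have hθ'' : θ'' τ = -(2 * (cosh (φ τ) / sinh (φ τ)) * θ' τ * φ' τ)
        - (1 / sinh (φ τ) ^ 2) * fderiv ℝ V (θ τ, φ τ) (1, 0) := by linarith [eomθ τ hτ]
    have hcsq : Real.cosh (φ τ) ^ 2 = Real.sinh (φ τ) ^ 2 + 1 := Real.cosh_sq (φ τ)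
    rw [hφ'', hθ'', (hVd (θ τ) (φ τ)).1, (hVd (θ τ) (φ τ)).2]
    simp only [Pi.mul_apply, Pi.pow_apply]
    field_simp
    ring_nf
    rw [hcsq]
    ring
  intro s hs t ht
  exact (convex_Ioo t₀ t₁).is_const_of_fderivWithin_eq_zero
    (fun x hx => ((hd x hx).differentiableAt).differentiableWithinAt)
    (fun x hx => by
      have h0 := ((hd x hx).hasFDerivAt.hasFDerivWithinAt).fderivWithin
        (isOpen_Ioo.uniqueDiffWithinAt hx)
      rw [h0]; ext v; simp) hs ht
end

section
/- For the Bianchi I model with massless scalar field (zero potential), the Noether integral of the boost-type Killing vector Y⁵ = φ∂_{β₁} − (3/2)β₁∂_φ is conserved: if λ, β₁, φ : ℝ → ℝ are twice differentiable and satisfy β̈₁ + 3λ̇β̇₁ = 0 and φ̈ + 3λ̇φ̇ = 0, then the function t ↦ e^{3λ(t)}·( φ(t)·β̇₁(t) − β₁(t)·φ̇(t) ) is constant on ℝ. -/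
open Real

/-- for the Bianchi I model with massless scalar field, the Noether
integral of the boost-type Killing vector `Y⁵ = φ∂_{β₁} − (3/2)β₁∂_φ` is conserved: if
`β̈₁ + 3λ̇β̇₁ = 0` and `φ̈ + 3λ̇φ̇ = 0` then `e^{3λ}·(φβ̇₁ − β₁φ̇)` is constant. -/
theorem bianchiI_noether_Y5
    (lam β₁ φ lam' β₁' φ' lam'' β₁'' φ'' : ℝ → ℝ)
    (hlam : ∀ t : ℝ, HasDerivAt lam (lam' t) t)
    (hlam' : ∀ t : ℝ, HasDerivAt lam' (lam'' t) t)
    (hβ₁ : ∀ t : ℝ, HasDerivAt β₁ (β₁' t) t)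
    (hβ₁' : ∀ t : ℝ, HasDerivAt β₁' (β₁'' t) t)
    (hφ : ∀ t : ℝ, HasDerivAt φ (φ' t) t)
    (hφ' : ∀ t : ℝ, HasDerivAt φ' (φ'' t) t)
    (eomβ₁ : ∀ t : ℝ, β₁'' t + 3 * lam' t * β₁' t = 0)
    (eomφ : ∀ t : ℝ, φ'' t + 3 * lam' t * φ' t = 0) :
    ∀ s t : ℝ,
      exp (3 * lam s) * (φ s * β₁' s - β₁ s * φ' s) =
      exp (3 * lam t) * (φ t * β₁' t - β₁ t * φ' t) := by
  have key : ∀ x : ℝ, HasDerivAt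
      (fun t => exp (3 * lam t) * (φ t * β₁' t - β₁ t * φ' t)) 0 x := by
    intro x
    have h := ((((hlam x).const_mul 3).exp).mul
      (((hφ x).mul (hβ₁' x)).sub ((hβ₁ x).mul (hφ' x))))
    convert h using 1
    · rfl
    · rfl
    · rfl
    have h1 := eomβ₁ x
    have h2 := eomφ x
    have e1 : β₁'' x = -(3 * lam' x * β₁' x) := by linarith
    have e2 : φ'' x = -(3 * lam' x * φ' x) := by linarith
    rw [e1, e2]; simp only [Pi.sub_apply, Pi.mul_apply]; ring
  intro s t
  exact is_const_of_deriv_eq_zero (fun x => (key x).differentiableAt)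
    (fun x => (key x).deriv) s t
end

section
/- For the Bianchi I model with massless scalar field (zero potential), the Noether integral of the point symmetry 2t∂_t + H^i (where H^i = (2/3)∂_λ is the gradient homothetic vector of the minisuperspace metric) is conserved: if λ, β₁, β₂, φ : ℝ → ℝ are twice differentiable and satisfy λ̈ + (3/2)λ̇² + (3/8)(β̇₁² + β̇₂²) + (1/4)φ̇² = 0, β̈₁ + 3λ̇β̇₁ = 0, β̈₂ + 3λ̇β̇₂ = 0 and φ̈ + 3λ̇φ̇ = 0, then the function t ↦ 2t·E(t) − 8e^{3λ(t)}·λ̇(t) is constant on ℝ, where E(t) = e^{3λ(t)}( 6λ̇(t)² − (3/2)(β̇₁(t)² + β̇₂(t)²) − φ̇(t)² ) is the Hamiltonian. -/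
open Real

/-- for the Bianchi I model with massless scalar field, the Noether
integral of the point symmetry `2t∂_t + Hⁱ` (with `Hⁱ = (2/3)∂_λ` the gradient homothetic
vector of the minisuperspace metric) is conserved: along solutions of the full
Euler–Lagrange equations the quantity `2t·E − 8e^{3λ}·λ̇` is constant, where
`E = e^{3λ}(6λ̇² − (3/2)(β̇₁² + β̇₂²) − φ̇²)` is the Hamiltonian. -/
theorem bianchiI_noether_2tdt_H
    (lam β₁ β₂ φ lam' β₁' β₂' φ' lam'' β₁'' β₂'' φ'' : ℝ → ℝ)
    (hlam : ∀ t : ℝ, HasDerivAt lam (lam' t) t)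
    (hlam' : ∀ t : ℝ, HasDerivAt lam' (lam'' t) t)
    (hβ₁ : ∀ t : ℝ, HasDerivAt β₁ (β₁' t) t)
    (hβ₁' : ∀ t : ℝ, HasDerivAt β₁' (β₁'' t) t)
    (hβ₂ : ∀ t : ℝ, HasDerivAt β₂ (β₂' t) t)
    (hβ₂' : ∀ t : ℝ, HasDerivAt β₂' (β₂'' t) t)
    (hφ : ∀ t : ℝ, HasDerivAt φ (φ' t) t)
    (hφ' : ∀ t : ℝ, HasDerivAt φ' (φ'' t) t)
    (eomlam : ∀ t : ℝ, lam'' t + (3 / 2) * lam' t ^ 2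
      + (3 / 8) * (β₁' t ^ 2 + β₂' t ^ 2) + (1 / 4) * φ' t ^ 2 = 0)
    (eomβ₁ : ∀ t : ℝ, β₁'' t + 3 * lam' t * β₁' t = 0)
    (eomβ₂ : ∀ t : ℝ, β₂'' t + 3 * lam' t * β₂' t = 0)
    (eomφ : ∀ t : ℝ, φ'' t + 3 * lam' t * φ' t = 0)
    (E : ℝ → ℝ)
    (hE : ∀ t : ℝ, E t = exp (3 * lam t) *
      (6 * lam' t ^ 2 - (3 / 2) * (β₁' t ^ 2 + β₂' t ^ 2) - φ' t ^ 2)) :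
    ∀ s t : ℝ,
      2 * s * E s - 8 * exp (3 * lam s) * lam' s =
      2 * t * E t - 8 * exp (3 * lam t) * lam' t := by
  have key : ∀ s t : ℝ,
      2 * s * (exp (3 * lam s) *
        (6 * lam' s ^ 2 - (3 / 2) * (β₁' s ^ 2 + β₂' s ^ 2) - φ' s ^ 2))
        - 8 * exp (3 * lam s) * lam' s =
      2 * t * (exp (3 * lam t) *
        (6 * lam' t ^ 2 - (3 / 2) * (β₁' t ^ 2 + β₂' t ^ 2) - φ' t ^ 2))
        - 8 * exp (3 * lam t) * lam' t := by
    set F : ℝ → ℝ := fun t => 2 * t * (exp (3 * lam t) *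
        (6 * lam' t ^ 2 - (3 / 2) * (β₁' t ^ 2 + β₂' t ^ 2) - φ' t ^ 2))
        - 8 * exp (3 * lam t) * lam' t with hF
    have hd : ∀ t : ℝ, HasDerivAt F 0 t := by
      intro t
      have hexp : HasDerivAt (fun t => exp (3 * lam t))
          (exp (3 * lam t) * (3 * lam' t)) t :=
        (((hlam t).const_mul 3).exp)
      have hq : HasDerivAt (fun t =>
          6 * lam' t ^ 2 - (3 / 2) * (β₁' t ^ 2 + β₂' t ^ 2) - φ' t ^ 2)
          (6 * (2 * lam' t * lam'' t)
            - (3 / 2) * (2 * β₁' t * β₁'' t + 2 * β₂' t * β₂'' t)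
            - 2 * φ' t * φ'' t) t := by
        have := ((((hlam' t).fun_pow 2).const_mul 6).fun_sub
          ((((hβ₁' t).fun_pow 2).fun_add ((hβ₂' t).fun_pow 2)).const_mul (3/2))).fun_sub
          ((hφ' t).fun_pow 2)
        refine this.congr_deriv ?_
        push_cast
        ring
      have h1 : HasDerivAt (fun t : ℝ => 2 * t * (exp (3 * lam t) *
          (6 * lam' t ^ 2 - (3 / 2) * (β₁' t ^ 2 + β₂' t ^ 2) - φ' t ^ 2)))
          (2 * (exp (3 * lam t) *
            (6 * lam' t ^ 2 - (3 / 2) * (β₁' t ^ 2 + β₂' t ^ 2) - φ' t ^ 2))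
           + 2 * t * (exp (3 * lam t) * (3 * lam' t) *
              (6 * lam' t ^ 2 - (3 / 2) * (β₁' t ^ 2 + β₂' t ^ 2) - φ' t ^ 2)
             + exp (3 * lam t) *
              (6 * (2 * lam' t * lam'' t)
                - (3 / 2) * (2 * β₁' t * β₁'' t + 2 * β₂' t * β₂'' t)
                - 2 * φ' t * φ'' t))) t := by
        have := ((hasDerivAt_id t).const_mul 2).fun_mul (hexp.fun_mul hq)
        simpa using this
      have h2 : HasDerivAt (fun t : ℝ => 8 * exp (3 * lam t) * lam' t)
          (8 * (exp (3 * lam t) * (3 * lam' t)) * lam' t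
            + 8 * exp (3 * lam t) * lam'' t) t := by
        exact ((hexp.const_mul 8).fun_mul (hlam' t))
      have := h1.fun_sub h2
      refine this.congr_deriv ?_
      have e1 := eomlam t
      have e2 := eomβ₁ t
      have e3 := eomβ₂ t
      have e4 := eomφ t
      have hl'' : lam'' t = -((3 / 2) * lam' t ^ 2
          + (3 / 8) * (β₁' t ^ 2 + β₂' t ^ 2) + (1 / 4) * φ' t ^ 2) := by linarith
      have hb1 : β₁'' t = -(3 * lam' t * β₁' t) := by linarith
      have hb2 : β₂'' t = -(3 * lam' t * β₂' t) := by linarith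
      have hp : φ'' t = -(3 * lam' t * φ' t) := by linarith
      rw [hl'', hb1, hb2, hp]
      ring
    intro s t
    have : ∀ x y : ℝ, F x = F y := fun x y =>
      (is_const_of_deriv_eq_zero (fun x => (hd x).differentiableAt)
        (fun x => (hd x).deriv)) x y
    exact this s t
  intro s t
  rw [hE s, hE t]
  exact key s t
end

section
/- For the Bianchi I model with massless scalar field (zero potential), the Noether integral of the point symmetry t²∂_t + tH^i (where H^i = (2/3)∂_λ is the gradient homothetic vector of the minisuperspace metric, with gradient function H = (8/3)e^{3λ}) is conserved: if λ, β₁, β₂, φ : ℝ → ℝ are twice differentiable and satisfy λ̈ + (3/2)λ̇² + (3/8)(β̇₁² + β̇₂²) + (1/4)φ̇² = 0, β̈₁ + 3λ̇β̇₁ = 0, β̈₂ + 3λ̇β̇₂ = 0 and φ̈ + 3λ̇φ̇ = 0, then the function t ↦ t²·E(t) − 8t·e^{3λ(t)}·λ̇(t) + (8/3)·e^{3λ(t)} is constant on ℝ, where E(t) = e^{3λ(t)}( 6λ̇(t)² − (3/2)(β̇₁(t)² + β̇₂(t)²) − φ̇(t)² ) is the Hamiltonian. -/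
open Real

/-- for the Bianchi I model with massless scalar field, the Noether
integral of the point symmetry `t²∂_t + tHⁱ` (with `Hⁱ = (2/3)∂_λ` the gradient
homothetic vector of the minisuperspace metric, with gradient function
`H = (8/3)e^{3λ}`) is conserved: along solutions of the full Euler–Lagrange equations
the quantity `t²·E − 8t·e^{3λ}·λ̇ + (8/3)·e^{3λ}` is constant, where
`E = e^{3λ}(6λ̇² − (3/2)(β̇₁² + β̇₂²) − φ̇²)` is the Hamiltonian. -/
theorem bianchiI_noether_t2dt_tH
    (lam β₁ β₂ φ lam' β₁' β₂' φ' lam'' β₁'' β₂'' φ'' : ℝ → ℝ)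
    (hlam : ∀ t : ℝ, HasDerivAt lam (lam' t) t)
    (hlam' : ∀ t : ℝ, HasDerivAt lam' (lam'' t) t)
    (hβ₁ : ∀ t : ℝ, HasDerivAt β₁ (β₁' t) t)
    (hβ₁' : ∀ t : ℝ, HasDerivAt β₁' (β₁'' t) t)
    (hβ₂ : ∀ t : ℝ, HasDerivAt β₂ (β₂' t) t)
    (hβ₂' : ∀ t : ℝ, HasDerivAt β₂' (β₂'' t) t)
    (hφ : ∀ t : ℝ, HasDerivAt φ (φ' t) t)
    (hφ' : ∀ t : ℝ, HasDerivAt φ' (φ'' t) t)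
    (eomlam : ∀ t : ℝ, lam'' t + (3 / 2) * lam' t ^ 2
      + (3 / 8) * (β₁' t ^ 2 + β₂' t ^ 2) + (1 / 4) * φ' t ^ 2 = 0)
    (eomβ₁ : ∀ t : ℝ, β₁'' t + 3 * lam' t * β₁' t = 0)
    (eomβ₂ : ∀ t : ℝ, β₂'' t + 3 * lam' t * β₂' t = 0)
    (eomφ : ∀ t : ℝ, φ'' t + 3 * lam' t * φ' t = 0)
    (E : ℝ → ℝ)
    (hE : ∀ t : ℝ, E t = exp (3 * lam t) *
      (6 * lam' t ^ 2 - (3 / 2) * (β₁' t ^ 2 + β₂' t ^ 2) - φ' t ^ 2)) :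
    ∀ s t : ℝ,
      s ^ 2 * E s - 8 * s * exp (3 * lam s) * lam' s + (8 / 3) * exp (3 * lam s) =
      t ^ 2 * E t - 8 * t * exp (3 * lam t) * lam' t + (8 / 3) * exp (3 * lam t) := by
  set F : ℝ → ℝ := fun t => t ^ 2 * (exp (3 * lam t) *
      (6 * lam' t ^ 2 - (3 / 2) * (β₁' t ^ 2 + β₂' t ^ 2) - φ' t ^ 2))
      - 8 * t * exp (3 * lam t) * lam' t + (8 / 3) * exp (3 * lam t) with hF
  have key : ∀ s t : ℝ, F s = F t := by
    have hd : ∀ t : ℝ, HasDerivAt F 0 t := by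
      intro t
      have hexp : HasDerivAt (fun t => exp (3 * lam t)) (exp (3 * lam t) * (3 * lam' t)) t :=
        (((hlam t).const_mul 3).exp)
      have hQ : HasDerivAt (fun t => 6 * lam' t ^ 2 - (3 / 2) * (β₁' t ^ 2 + β₂' t ^ 2) - φ' t ^ 2)
          (6 * (2 * lam' t * lam'' t) - (3 / 2) * (2 * β₁' t * β₁'' t + 2 * β₂' t * β₂'' t)
            - 2 * φ' t * φ'' t) t := by
        have h1 := ((hlam' t).pow 2).const_mul 6
        have h2 := (((hβ₁' t).pow 2).add ((hβ₂' t).pow 2)).const_mul (3/2 : ℝ)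
        have h3 := (hφ' t).pow 2
        have := (h1.sub h2).sub h3
        exact this.congr_deriv (by push_cast; ring)
      have h1 := (((hasDerivAt_pow 2 t).mul (hexp.mul hQ)))
      have h2 := ((((hasDerivAt_id t).const_mul 8).mul hexp).mul (hlam' t))
      have h3 := hexp.const_mul (8/3 : ℝ)
      have hall := (h1.sub h2).add h3
      refine hall.congr_deriv ?_
      symm
      have e1 := eomlam t
      have e2 := eomβ₁ t
      have e3 := eomβ₂ t
      have e4 := eomφ t
      simp only [id, Pi.mul_apply]
      norm_num
      linear_combination (exp (3 * lam t) * (8 * t - 12 * t ^ 2 * lam' t)) * e1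
        + (exp (3 * lam t) * (3 * t ^ 2 * β₁' t)) * e2
        + (exp (3 * lam t) * (3 * t ^ 2 * β₂' t)) * e3
        + (exp (3 * lam t) * (2 * t ^ 2 * φ' t)) * e4
    intro s t
    have := is_const_of_deriv_eq_zero (f := F)
      (fun x => (hd x).differentiableAt) (fun x => (hd x).deriv) s t
    exact this
  intro s t
  have := key s t
  simpa [hF, hE] using this
end
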